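/- arXiv:2009.09903 — 3 statements merged into one kernel-verified Lean document; each statement's English description precedes it below -/
import Mathlib

section
/- Let H be a weak Hopf algebra over a field k and let C be a left H-comodule coalgebra via ρ. Then for all c∈C and h∈H, (ε̂⊗id)(Δ̃(c×h)) = c×h = (id⊗ε̂)(Δ̃(c×h)); i.e. ε̂ is a counit for the coproduct Δ̃ on the weak smash coproduct C×H. -/
open TensorProduct

noncomputable section

variable (k : Type*) [Field k]
variable (H : Type*) [Ring H] [Algebra k H] [Coalgebra k H]

/-- `ε_t(h) = ε(1₍₁₎h) 1₍₂₎`, as a linear map. -/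
def epsT : H →ₗ[k] H :=
  (TensorProduct.lid k H).toLinearMap
    ∘ₗ TensorProduct.map (Coalgebra.counit : H →ₗ[k] k) (LinearMap.id : H →ₗ[k] H)
    ∘ₗ LinearMap.mulLeft k (Coalgebra.comul (R := k) (1 : H))
    ∘ₗ (TensorProduct.mk k H H).flip 1

/-- `ε_s(h) = 1₍₁₎ ε(h 1₍₂₎)`, as a linear map. -/
def epsS : H →ₗ[k] H :=
  (TensorProduct.rid k H).toLinearMap
    ∘ₗ TensorProduct.map (LinearMap.id : H →ₗ[k] H) (Coalgebra.counit : H →ₗ[k] k)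
    ∘ₗ LinearMap.mulRight k (Coalgebra.comul (R := k) (1 : H))
    ∘ₗ TensorProduct.mk k H H 1

/-- The functional `x ⊗ y ↦ ε(ax) ε(yc)`. -/
def epsPair (a c : H) : H ⊗[k] H →ₗ[k] k :=
  (TensorProduct.lid k k).toLinearMap
    ∘ₗ TensorProduct.map ((Coalgebra.counit : H →ₗ[k] k) ∘ₗ LinearMap.mulLeft k a)
        ((Coalgebra.counit : H →ₗ[k] k) ∘ₗ LinearMap.mulRight k c)

/-- The functional `x ⊗ y ↦ ε(ay) ε(xc)`. -/
def epsPair' (a c : H) : H ⊗[k] H →ₗ[k] k :=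
  (TensorProduct.lid k k).toLinearMap
    ∘ₗ TensorProduct.map ((Coalgebra.counit : H →ₗ[k] k) ∘ₗ LinearMap.mulRight k c)
        ((Coalgebra.counit : H →ₗ[k] k) ∘ₗ LinearMap.mulLeft k a)

/-- The weak bialgebra axioms for an algebra-and-coalgebra `H`. -/
def IsWeakBialgebra : Prop :=
  (∀ a b : H, Coalgebra.comul (R := k) (a * b) = Coalgebra.comul a * Coalgebra.comul b) ∧
  (∀ a b c : H,
    Coalgebra.counit (R := k) (a * b * c) = epsPair k H a c (Coalgebra.comul b)) ∧
  (∀ a b c : H,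
    Coalgebra.counit (R := k) (a * b * c) = epsPair' k H a c (Coalgebra.comul b)) ∧
  (((1 : H) ⊗ₜ[k] Coalgebra.comul (R := k) (1 : H)) *
      (TensorProduct.assoc k H H H (Coalgebra.comul (R := k) (1 : H) ⊗ₜ[k] (1 : H)))
    = TensorProduct.assoc k H H H
        (TensorProduct.map (Coalgebra.comul (R := k)) (LinearMap.id : H →ₗ[k] H)
          (Coalgebra.comul (R := k) (1 : H)))) ∧
  ((TensorProduct.assoc k H H H (Coalgebra.comul (R := k) (1 : H) ⊗ₜ[k] (1 : H))) *
      ((1 : H) ⊗ₜ[k] Coalgebra.comul (R := k) (1 : H))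
    = TensorProduct.assoc k H H H
        (TensorProduct.map (Coalgebra.comul (R := k)) (LinearMap.id : H →ₗ[k] H)
          (Coalgebra.comul (R := k) (1 : H))))

/-- The weak Hopf algebra axioms: `H` is a weak bialgebra and `S` is an antipode, i.e.
`h₁ S(h₂) = ε_t(h)`, `S(h₁) h₂ = ε_s(h)` and `S(h₁) h₂ S(h₃) = S(h)`. -/
def IsWeakHopfAlgebra (S : H →ₗ[k] H) : Prop :=
  IsWeakBialgebra k H ∧
  (∀ h : H, LinearMap.mul' k H
      (TensorProduct.map (LinearMap.id : H →ₗ[k] H) S (Coalgebra.comul (R := k) h))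
    = epsT k H h) ∧
  (∀ h : H, LinearMap.mul' k H
      (TensorProduct.map S (LinearMap.id : H →ₗ[k] H) (Coalgebra.comul (R := k) h))
    = epsS k H h) ∧
  (∀ h : H, LinearMap.mul' k H
      (TensorProduct.map (LinearMap.mul' k H ∘ₗ TensorProduct.map S (LinearMap.id : H →ₗ[k] H)) S
        (TensorProduct.map (Coalgebra.comul (R := k)) (LinearMap.id : H →ₗ[k] H)
          (Coalgebra.comul (R := k) h)))
    = S h)

variable (C : Type*) [AddCommGroup C] [Module k C] [Coalgebra k C]

/-- `(h ⊗ c) ⊗ (h' ⊗ c') ↦ hh' ⊗ (c ⊗ c')`. -/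
def mixHC : (H ⊗[k] C) ⊗[k] (H ⊗[k] C) →ₗ[k] H ⊗[k] (C ⊗[k] C) :=
  TensorProduct.map (LinearMap.mul' k H) (LinearMap.id : C ⊗[k] C →ₗ[k] C ⊗[k] C)
    ∘ₗ (TensorProduct.tensorTensorTensorComm k H C H C).toLinearMap

/-- (CC1): `ε_H(c⁽⁻¹⁾) c⁽⁰⁾ = c`. -/
def CC1 (ρ : C →ₗ[k] H ⊗[k] C) : Prop :=
  ∀ c : C, TensorProduct.lid k C
    (TensorProduct.map (Coalgebra.counit : H →ₗ[k] k) (LinearMap.id : C →ₗ[k] C) (ρ c)) = c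

/-- (CC2): `c⁽⁻¹⁾ ⊗ Δ_C(c⁽⁰⁾) = c₁⁽⁻¹⁾c₂⁽⁻¹⁾ ⊗ c₁⁽⁰⁾ ⊗ c₂⁽⁰⁾`. -/
def CC2 (ρ : C →ₗ[k] H ⊗[k] C) : Prop :=
  ∀ c : C, TensorProduct.map (LinearMap.id : H →ₗ[k] H) (Coalgebra.comul (R := k)) (ρ c)
    = mixHC k H C (TensorProduct.map ρ ρ (Coalgebra.comul c))

/-- (CC3): `c⁽⁻¹⁾ ⊗ ρ(c⁽⁰⁾) = (c⁽⁻¹⁾)₁ ⊗ (c⁽⁻¹⁾)₂ ⊗ c⁽⁰⁾`. -/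
def CC3 (ρ : C →ₗ[k] H ⊗[k] C) : Prop :=
  ∀ c : C, TensorProduct.map (LinearMap.id : H →ₗ[k] H) ρ (ρ c)
    = TensorProduct.assoc k H H C
        (TensorProduct.map (Coalgebra.comul (R := k)) (LinearMap.id : C →ₗ[k] C) (ρ c))

/-- (CC4): `c⁽⁻¹⁾ ε_C(c⁽⁰⁾) = ε_t(c⁽⁻¹⁾) ε_C(c⁽⁰⁾)`. -/
def CC4 (ρ : C →ₗ[k] H ⊗[k] C) : Prop :=
  ∀ c : C, TensorProduct.rid k H
      (TensorProduct.map (LinearMap.id : H →ₗ[k] H) (Coalgebra.counit : C →ₗ[k] k) (ρ c))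
    = TensorProduct.rid k H
      (TensorProduct.map (epsT k H) (Coalgebra.counit : C →ₗ[k] k) (ρ c))

/-- The right-hand side of (CCP3):
`c ↦ c₁⁽⁻¹⁾ε_C(c₁⁽⁰⁾)(c₂⁽⁻¹⁾)₁ ⊗ (c₂⁽⁻¹⁾)₂ ⊗ c₂⁽⁰⁾`. -/
def ccp3RHS (ρ : C →ₗ[k] H ⊗[k] C) : C →ₗ[k] H ⊗[k] (H ⊗[k] C) :=
  (TensorProduct.assoc k H H C).toLinearMap
  ∘ₗ TensorProduct.map
      (TensorProduct.map (LinearMap.mul' k H) (LinearMap.id : H →ₗ[k] H)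
        ∘ₗ (TensorProduct.assoc k H H H).symm.toLinearMap)
      (LinearMap.id : C →ₗ[k] C)
  ∘ₗ (TensorProduct.assoc k H (H ⊗[k] H) C).symm.toLinearMap
  ∘ₗ TensorProduct.map
      ((TensorProduct.rid k H).toLinearMap
        ∘ₗ TensorProduct.map (LinearMap.id : H →ₗ[k] H) (Coalgebra.counit : C →ₗ[k] k) ∘ₗ ρ)
      (TensorProduct.map (Coalgebra.comul (R := k)) (LinearMap.id : C →ₗ[k] C) ∘ₗ ρ)
  ∘ₗ (Coalgebra.comul (R := k) : C →ₗ[k] C ⊗[k] C)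

/-- The right-hand side of the symmetry condition:
`c ↦ (c₁⁽⁻¹⁾)₁c₂⁽⁻¹⁾ε_C(c₂⁽⁰⁾) ⊗ (c₁⁽⁻¹⁾)₂ ⊗ c₁⁽⁰⁾`. -/
def ccpSymRHS (ρ : C →ₗ[k] H ⊗[k] C) : C →ₗ[k] H ⊗[k] (H ⊗[k] C) :=
  (TensorProduct.assoc k H H C).toLinearMap
  ∘ₗ TensorProduct.map
      (TensorProduct.map (LinearMap.mul' k H ∘ₗ (TensorProduct.comm k H H).toLinearMap)
          (LinearMap.id : H →ₗ[k] H)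
        ∘ₗ (TensorProduct.assoc k H H H).symm.toLinearMap)
      (LinearMap.id : C →ₗ[k] C)
  ∘ₗ (TensorProduct.assoc k H (H ⊗[k] H) C).symm.toLinearMap
  ∘ₗ (TensorProduct.comm k ((H ⊗[k] H) ⊗[k] C) H).toLinearMap
  ∘ₗ TensorProduct.map
      (TensorProduct.map (Coalgebra.comul (R := k)) (LinearMap.id : C →ₗ[k] C) ∘ₗ ρ)
      ((TensorProduct.rid k H).toLinearMap
        ∘ₗ TensorProduct.map (LinearMap.id : H →ₗ[k] H) (Coalgebra.counit : C →ₗ[k] k) ∘ₗ ρ)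
  ∘ₗ (Coalgebra.comul (R := k) : C →ₗ[k] C ⊗[k] C)

/-- (CCP3). -/
def CCP3 (ρ : C →ₗ[k] H ⊗[k] C) : Prop :=
  ∀ c : C, TensorProduct.map (LinearMap.id : H →ₗ[k] H) ρ (ρ c) = ccp3RHS k H C ρ c

/-- The symmetry condition for a partial comodule coalgebra. -/
def CCPSym (ρ : C →ₗ[k] H ⊗[k] C) : Prop :=
  ∀ c : C, TensorProduct.map (LinearMap.id : H →ₗ[k] H) ρ (ρ c) = ccpSymRHS k H C ρ c

/-- `C` is a left `H`-comodule coalgebra via `ρ`. -/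
def IsComoduleCoalgebra (ρ : C →ₗ[k] H ⊗[k] C) : Prop :=
  CC1 k H C ρ ∧ CC2 k H C ρ ∧ CC3 k H C ρ ∧ CC4 k H C ρ

/-- `C` is a left partial `H`-comodule coalgebra via `ρ`. -/
def IsPartialComoduleCoalgebra (ρ : C →ₗ[k] H ⊗[k] C) : Prop :=
  CC1 k H C ρ ∧ CC2 k H C ρ ∧ CCP3 k H C ρ

/-- The smash coproduct `Δ̃(c ⊗ h) = (c₁ ⊗ c₂⁽⁻¹⁾h₁) ⊗ (c₂⁽⁰⁾ ⊗ h₂)`. -/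
def smashComul (ρ : C →ₗ[k] H ⊗[k] C) :
    C ⊗[k] H →ₗ[k] (C ⊗[k] H) ⊗[k] (C ⊗[k] H) :=
  TensorProduct.map
      (TensorProduct.map (LinearMap.id : C →ₗ[k] C) (LinearMap.mul' k H)
        ∘ₗ (TensorProduct.assoc k C H H).toLinearMap)
      (LinearMap.id : C ⊗[k] H →ₗ[k] C ⊗[k] H)
  ∘ₗ (TensorProduct.tensorTensorTensorComm k (C ⊗[k] H) C H H).toLinearMap
  ∘ₗ TensorProduct.map
      ((TensorProduct.assoc k C H C).symm.toLinearMap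
        ∘ₗ TensorProduct.map (LinearMap.id : C →ₗ[k] C) ρ
        ∘ₗ (Coalgebra.comul (R := k) : C →ₗ[k] C ⊗[k] C))
      (Coalgebra.comul (R := k) : H →ₗ[k] H ⊗[k] H)

/-- The smash counit `ε̂(c ⊗ h) = ε_C(c⁽⁰⁾) ε_H(c⁽⁻¹⁾h)`. -/
def smashCounit (ρ : C →ₗ[k] H ⊗[k] C) : C ⊗[k] H →ₗ[k] k :=
  (TensorProduct.lid k k).toLinearMap
  ∘ₗ TensorProduct.map (Coalgebra.counit : C →ₗ[k] k)
      ((Coalgebra.counit : H →ₗ[k] k) ∘ₗ LinearMap.mul' k H)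
  ∘ₗ (TensorProduct.assoc k C H H).toLinearMap
  ∘ₗ TensorProduct.map (TensorProduct.comm k H C).toLinearMap (LinearMap.id : H →ₗ[k] H)
  ∘ₗ TensorProduct.map ρ (LinearMap.id : H →ₗ[k] H)

/-- The projection `P(c ⊗ h) = c⁽⁰⁾ ⊗ h₂ ε_H(c⁽⁻¹⁾h₁)` onto the weak smash coproduct. -/
def smashP (ρ : C →ₗ[k] H ⊗[k] C) : C ⊗[k] H →ₗ[k] C ⊗[k] H :=
  (TensorProduct.lid k (C ⊗[k] H)).toLinearMap
  ∘ₗ TensorProduct.map ((Coalgebra.counit : H →ₗ[k] k) ∘ₗ LinearMap.mul' k H)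
      (LinearMap.id : C ⊗[k] H →ₗ[k] C ⊗[k] H)
  ∘ₗ (TensorProduct.tensorTensorTensorComm k H C H H).toLinearMap
  ∘ₗ TensorProduct.map ρ (Coalgebra.comul (R := k) : H →ₗ[k] H ⊗[k] H)

end



noncomputable section
set_option linter.unusedSectionVars false
namespace WSCAux
open TensorProduct

section Sums
variable {α β γ δ M : Type*} [AddCommMonoid M]

lemma sum_mix4 (s : Finset α) (t : α → Finset β) (u : Finset γ) (v : γ → Finset δ)
    (f : α → β → γ → δ → M) :
    ∑ a ∈ s, ∑ b ∈ t a, ∑ cc ∈ u, ∑ d ∈ v cc, f a b cc d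
      = ∑ a ∈ s, ∑ cc ∈ u, ∑ b ∈ t a, ∑ d ∈ v cc, f a b cc d :=
  Finset.sum_congr rfl fun a _ => Finset.sum_comm

lemma sum_swap4 (s : Finset α) (t : α → Finset β) (u : Finset γ) (v : γ → Finset δ)
    (f : α → β → γ → δ → M) :
    ∑ a ∈ s, ∑ b ∈ t a, ∑ cc ∈ u, ∑ d ∈ v cc, f a b cc d
      = ∑ cc ∈ u, ∑ d ∈ v cc, ∑ a ∈ s, ∑ b ∈ t a, f a b cc d := by
  rw [sum_mix4, Finset.sum_comm]
  refine Finset.sum_congr rfl fun cc _ => ?_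
  calc ∑ a ∈ s, ∑ b ∈ t a, ∑ d ∈ v cc, f a b cc d
      = ∑ a ∈ s, ∑ d ∈ v cc, ∑ b ∈ t a, f a b cc d :=
        Finset.sum_congr rfl fun a _ => Finset.sum_comm
    _ = ∑ d ∈ v cc, ∑ a ∈ s, ∑ b ∈ t a, f a b cc d := Finset.sum_comm

end Sums

variable {k : Type*} [Field k]

section Coalg
variable {A : Type*} [AddCommGroup A] [Module k A] [Coalgebra k A]

lemma counit_left {ι : Type*} {s : Finset ι} {f g : ι → A} {a : A}
    (hs : Coalgebra.comul (R := k) a = ∑ i ∈ s, f i ⊗ₜ[k] g i) :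
    ∑ i ∈ s, Coalgebra.counit (R := k) (f i) • g i = a := by
  have h := Coalgebra.rTensor_counit_comul (R := k) a
  rw [hs, map_sum] at h
  simpa [map_sum] using congrArg (TensorProduct.lid k A) h

lemma counit_right {ι : Type*} {s : Finset ι} {f g : ι → A} {a : A}
    (hs : Coalgebra.comul (R := k) a = ∑ i ∈ s, f i ⊗ₜ[k] g i) :
    ∑ i ∈ s, Coalgebra.counit (R := k) (g i) • f i = a := by
  have h := Coalgebra.lTensor_counit_comul (R := k) a
  rw [hs, map_sum] at h
  simpa [map_sum] using congrArg (TensorProduct.rid k A) h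

lemma counit_counit {ι : Type*} {s : Finset ι} {f g : ι → A} {a : A}
    (hs : Coalgebra.comul (R := k) a = ∑ i ∈ s, f i ⊗ₜ[k] g i) :
    ∑ i ∈ s, Coalgebra.counit (R := k) (f i) * Coalgebra.counit (R := k) (g i)
      = Coalgebra.counit (R := k) a := by
  have h := counit_left hs
  have := congrArg (Coalgebra.counit (R := k)) h
  simpa [map_sum, smul_eq_mul] using this

/-- canonical representation of `comul a` -/
def corep (k : Type*) [Field k] {A : Type*} [AddCommGroup A] [Module k A] [Coalgebra k A]
    (a : A) : Finset (A × A) :=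
  (TensorProduct.exists_finset (Coalgebra.comul (R := k) a)).choose

lemma corep_spec (a : A) :
    Coalgebra.comul (R := k) a = ∑ p ∈ corep k a, p.1 ⊗ₜ[k] p.2 :=
  (TensorProduct.exists_finset (Coalgebra.comul (R := k) a)).choose_spec

lemma coassoc_rep (a : A) :
    ∑ j ∈ corep k a, ∑ m ∈ corep k j.2, j.1 ⊗ₜ[k] (m.1 ⊗ₜ[k] m.2)
      = ∑ j ∈ corep k a, ∑ n ∈ corep k j.1, n.1 ⊗ₜ[k] (n.2 ⊗ₜ[k] j.2) := by
  have h := Coalgebra.coassoc_apply (R := k) a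
  have hL : TensorProduct.assoc k A A A
        ((Coalgebra.comul (R := k)).rTensor A (Coalgebra.comul (R := k) a))
      = ∑ j ∈ corep k a, ∑ n ∈ corep k j.1, n.1 ⊗ₜ[k] (n.2 ⊗ₜ[k] j.2) := by
    rw [corep_spec a, map_sum, map_sum]
    refine Finset.sum_congr rfl fun j _ => ?_
    rw [LinearMap.rTensor_tmul, corep_spec j.1, TensorProduct.sum_tmul, map_sum]
    simp
  have hR : (Coalgebra.comul (R := k)).lTensor A (Coalgebra.comul (R := k) a)
      = ∑ j ∈ corep k a, ∑ m ∈ corep k j.2, j.1 ⊗ₜ[k] (m.1 ⊗ₜ[k] m.2) := by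
    rw [corep_spec a, map_sum]
    refine Finset.sum_congr rfl fun j _ => ?_
    rw [LinearMap.lTensor_tmul, corep_spec j.2, TensorProduct.tmul_sum]
  rw [← hL, ← hR, h]

end Coalg

section Alg
variable {H : Type*} [Ring H] [Algebra k H] [Coalgebra k H]

lemma comul_mul_rep
    (hmul : ∀ a b : H, Coalgebra.comul (R := k) (a * b) = Coalgebra.comul a * Coalgebra.comul b)
    {ι κ : Type*} {s : Finset ι} {t : Finset κ} {f g : ι → H} {f' g' : κ → H} {a b : H}
    (ha : Coalgebra.comul (R := k) a = ∑ i ∈ s, f i ⊗ₜ[k] g i)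
    (hb : Coalgebra.comul (R := k) b = ∑ j ∈ t, f' j ⊗ₜ[k] g' j) :
    Coalgebra.comul (R := k) (a * b)
      = ∑ i ∈ s, ∑ j ∈ t, (f i * f' j) ⊗ₜ[k] (g i * g' j) := by
  rw [hmul, ha, hb, Finset.sum_mul_sum]
  simp [Algebra.TensorProduct.tmul_mul_tmul]

lemma eps_mul
    (hmul : ∀ a b : H, Coalgebra.comul (R := k) (a * b) = Coalgebra.comul a * Coalgebra.comul b)
    {ι κ : Type*} {s : Finset ι} {t : Finset κ} {f g : ι → H} {f' g' : κ → H} {a b : H}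
    (ha : Coalgebra.comul (R := k) a = ∑ i ∈ s, f i ⊗ₜ[k] g i)
    (hb : Coalgebra.comul (R := k) b = ∑ j ∈ t, f' j ⊗ₜ[k] g' j) :
    ∑ i ∈ s, ∑ j ∈ t, Coalgebra.counit (R := k) (f i * f' j)
        * Coalgebra.counit (R := k) (g i * g' j)
      = Coalgebra.counit (R := k) (a * b) := by
  have hab : Coalgebra.comul (R := k) (a * b)
      = ∑ p ∈ s ×ˢ t, (f p.1 * f' p.2) ⊗ₜ[k] (g p.1 * g' p.2) := by
    rw [comul_mul_rep hmul ha hb, ← Finset.sum_product']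
  simpa [Finset.sum_product] using WSCAux.counit_counit hab

lemma epsT_apply {ι : Type*} {o : Finset ι} {e f : ι → H}
    (h1 : Coalgebra.comul (R := k) (1 : H) = ∑ m ∈ o, e m ⊗ₜ[k] f m) (b : H) :
    epsT k H b = ∑ m ∈ o, Coalgebra.counit (R := k) (e m * b) • f m := by
  simp only [epsT, LinearMap.coe_comp, Function.comp_apply, LinearEquiv.coe_coe,
    TensorProduct.mk_apply, LinearMap.flip_apply, LinearMap.mulLeft_apply, h1,
    Finset.sum_mul]
  simp [Algebra.TensorProduct.tmul_mul_tmul, map_sum]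

lemma epsT_comul
    (hwb5 : (TensorProduct.assoc k H H H (Coalgebra.comul (R := k) (1 : H) ⊗ₜ[k] (1 : H))) *
      ((1 : H) ⊗ₜ[k] Coalgebra.comul (R := k) (1 : H))
    = TensorProduct.assoc k H H H
        (TensorProduct.map (Coalgebra.comul (R := k)) (LinearMap.id : H →ₗ[k] H)
          (Coalgebra.comul (R := k) (1 : H))))
    (b : H) :
    Coalgebra.comul (R := k) (epsT k H b)
      = (epsT k H b ⊗ₜ[k] (1 : H)) * Coalgebra.comul (R := k) (1 : H) := by
  obtain ⟨o, h1⟩ := TensorProduct.exists_finset (Coalgebra.comul (R := k) (1 : H))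
  have hco := Coalgebra.coassoc_apply (R := k) (1 : H)
  have hrt : TensorProduct.map (Coalgebra.comul (R := k)) (LinearMap.id : H →ₗ[k] H)
      (Coalgebra.comul (R := k) (1 : H))
      = LinearMap.rTensor H (Coalgebra.comul (R := k)) (Coalgebra.comul (R := k) (1 : H)) := rfl
  have key : ∑ m ∈ o, m.1 ⊗ₜ[k] Coalgebra.comul (R := k) m.2
      = ∑ m ∈ o, ∑ m' ∈ o, m.1 ⊗ₜ[k] ((m.2 * m'.1) ⊗ₜ[k] m'.2) := by
    have h2 : ∑ m ∈ o, m.1 ⊗ₜ[k] Coalgebra.comul (R := k) m.2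
        = LinearMap.lTensor H (Coalgebra.comul (R := k)) (Coalgebra.comul (R := k) (1 : H)) := by
      rw [h1, map_sum]; simp
    rw [h2, ← hco, ← hrt, ← hwb5, h1]
    rw [TensorProduct.sum_tmul, map_sum, Finset.sum_mul]
    simp only [TensorProduct.assoc_tmul, TensorProduct.tmul_sum, Finset.mul_sum]
    refine Finset.sum_congr rfl fun m _ => Finset.sum_congr rfl fun m' _ => ?_
    simp [Algebra.TensorProduct.tmul_mul_tmul]
  -- apply ε(· * b) to the first leg
  set L : H ⊗[k] (H ⊗[k] H) →ₗ[k] H ⊗[k] H :=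
    (TensorProduct.lid k (H ⊗[k] H)).toLinearMap
      ∘ₗ TensorProduct.map ((Coalgebra.counit : H →ₗ[k] k) ∘ₗ LinearMap.mulRight k b)
          (LinearMap.id : H ⊗[k] H →ₗ[k] H ⊗[k] H) with hL
  have hkey := congrArg L key
  simp only [map_sum, hL, LinearMap.coe_comp, Function.comp_apply, TensorProduct.map_tmul,
    LinearEquiv.coe_coe, TensorProduct.lid_tmul, LinearMap.mulRight_apply, LinearMap.id_coe,
    id_eq] at hkey
  have hlhs : Coalgebra.comul (R := k) (epsT k H b)
      = ∑ m ∈ o, Coalgebra.counit (R := k) (m.1 * b) • Coalgebra.comul (R := k) m.2 := by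
    rw [epsT_apply h1, map_sum]; simp
  rw [hlhs, hkey, epsT_apply h1, TensorProduct.sum_tmul, Finset.sum_mul, h1]
  refine Finset.sum_congr rfl fun m _ => ?_
  simp only [Finset.mul_sum, Algebra.TensorProduct.tmul_mul_tmul, smul_mul_assoc, one_mul,
    TensorProduct.smul_tmul']

lemma star_lemma
    (hmul : ∀ a b : H, Coalgebra.comul (R := k) (a * b) = Coalgebra.comul a * Coalgebra.comul b)
    (hwb5 : (TensorProduct.assoc k H H H (Coalgebra.comul (R := k) (1 : H) ⊗ₜ[k] (1 : H))) *
      ((1 : H) ⊗ₜ[k] Coalgebra.comul (R := k) (1 : H))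
    = TensorProduct.assoc k H H H
        (TensorProduct.map (Coalgebra.comul (R := k)) (LinearMap.id : H →ₗ[k] H)
          (Coalgebra.comul (R := k) (1 : H))))
    (b a h : H) {ι κ : Type*} {t : Finset ι} {u v : ι → H}
    (hdh : Coalgebra.comul (R := k) h = ∑ j ∈ t, u j ⊗ₜ[k] v j)
    {w : Finset κ} {zl zr : κ → H}
    (hz : Coalgebra.comul (R := k) (epsT k H b) = ∑ n ∈ w, zl n ⊗ₜ[k] zr n) :
    ∑ n ∈ w, ∑ j ∈ t, Coalgebra.counit (R := k) (a * zl n * u j) • (zr n * v j)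
      = ∑ j ∈ t, Coalgebra.counit (R := k) (a * epsT k H b * u j) • v j := by
  obtain ⟨o, h1⟩ := TensorProduct.exists_finset (Coalgebra.comul (R := k) (1 : H))
  set z := epsT k H b with hzdef
  set Φ : H ⊗[k] H →ₗ[k] H :=
    ∑ j ∈ t, (TensorProduct.lid k H).toLinearMap
      ∘ₗ TensorProduct.map
          ((Coalgebra.counit : H →ₗ[k] k) ∘ₗ LinearMap.mulLeft k a ∘ₗ LinearMap.mulRight k (u j))
          (LinearMap.mulRight k (v j)) with hΦ
  have hΦt : ∀ p q : H, Φ (p ⊗ₜ[k] q)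
      = ∑ j ∈ t, Coalgebra.counit (R := k) (a * (p * u j)) • (q * v j) := by
    intro p q
    simp [hΦ, LinearMap.sum_apply]
  have e1 : Φ (Coalgebra.comul (R := k) z)
      = ∑ n ∈ w, ∑ j ∈ t, Coalgebra.counit (R := k) (a * zl n * u j) • (zr n * v j) := by
    rw [hz, map_sum]
    exact Finset.sum_congr rfl fun n _ => by rw [hΦt]; simp [mul_assoc]
  have e2 : Φ (Coalgebra.comul (R := k) z)
      = ∑ m ∈ o, ∑ j ∈ t, Coalgebra.counit (R := k) ((a * z) * (m.1 * u j)) • (m.2 * v j) := by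
    rw [epsT_comul hwb5 b, ← hzdef, h1, Finset.mul_sum, map_sum]
    refine Finset.sum_congr rfl fun m _ => ?_
    rw [Algebra.TensorProduct.tmul_mul_tmul, one_mul, hΦt]
    simp [mul_assoc]
  have key2 : ∑ m ∈ o, ∑ j ∈ t, (m.1 * u j) ⊗ₜ[k] (m.2 * v j) = ∑ j ∈ t, u j ⊗ₜ[k] v j := by
    rw [← comul_mul_rep hmul h1 hdh, one_mul, hdh]
  set Φ' : H ⊗[k] H →ₗ[k] H :=
    (TensorProduct.lid k H).toLinearMap
      ∘ₗ TensorProduct.map ((Coalgebra.counit : H →ₗ[k] k) ∘ₗ LinearMap.mulLeft k (a * z))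
          (LinearMap.id : H →ₗ[k] H) with hΦ'
  have e3 := congrArg Φ' key2
  simp only [map_sum, hΦ', LinearMap.coe_comp, Function.comp_apply, TensorProduct.map_tmul,
    LinearEquiv.coe_coe, TensorProduct.lid_tmul, LinearMap.mulLeft_apply, LinearMap.id_coe,
    id_eq] at e3
  rw [← e1, e2]
  simpa [mul_assoc] using e3

lemma mul_rep_counit
    (hmul : ∀ a b : H, Coalgebra.comul (R := k) (a * b) = Coalgebra.comul a * Coalgebra.comul b)
    (a b : H) :
    ∑ n ∈ corep k a, ∑ j ∈ corep k b,
        Coalgebra.counit (R := k) (n.2 * j.2) • (n.1 * j.1) = a * b := by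
  have hab : Coalgebra.comul (R := k) (a * b)
      = ∑ p ∈ corep k a ×ˢ corep k b, (p.1.1 * p.2.1) ⊗ₜ[k] (p.1.2 * p.2.2) := by
    rw [comul_mul_rep hmul (corep_spec a) (corep_spec b), ← Finset.sum_product']
  simpa [Finset.sum_product] using counit_right hab

end Alg

section Comod
variable {H : Type*} [Ring H] [Algebra k H] [Coalgebra k H]
variable {C : Type*} [AddCommGroup C] [Module k C] [Coalgebra k C]
variable (ρ : C →ₗ[k] H ⊗[k] C)

/-- `c ↦ c⁽⁻¹⁾ ε_C(c⁽⁰⁾)` -/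
def rmap : C →ₗ[k] H :=
  (TensorProduct.rid k H).toLinearMap
    ∘ₗ TensorProduct.map (LinearMap.id : H →ₗ[k] H) (Coalgebra.counit : C →ₗ[k] k) ∘ₗ ρ

/-- canonical representation of `ρ c` -/
def rrep (c : C) : Finset (H × C) := (TensorProduct.exists_finset (ρ c)).choose

lemma rrep_spec (c : C) : ρ c = ∑ p ∈ rrep ρ c, p.1 ⊗ₜ[k] p.2 :=
  (TensorProduct.exists_finset (ρ c)).choose_spec

lemma rmap_apply {ι : Type*} {s : Finset ι} {x : ι → H} {y : ι → C} {c : C}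
    (hc : ρ c = ∑ i ∈ s, x i ⊗ₜ[k] y i) :
    rmap ρ c = ∑ i ∈ s, Coalgebra.counit (R := k) (y i) • x i := by
  simp [rmap, hc, map_sum]

lemma cc4_rmap (hcc4 : CC4 k H C ρ) (c : C) :
    rmap ρ c = epsT k H (rmap ρ c) := by
  have h := hcc4 c
  rw [rrep_spec ρ c, map_sum, map_sum, map_sum, map_sum] at h
  simp only [TensorProduct.map_tmul, LinearMap.id_coe, id_eq, TensorProduct.rid_tmul] at h
  have h2 : epsT k H (rmap ρ c)
      = ∑ p ∈ rrep ρ c, Coalgebra.counit (R := k) p.2 • epsT k H p.1 := by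
    rw [rmap_apply ρ (rrep_spec ρ c), map_sum]
    simp
  rw [h2, rmap_apply ρ (rrep_spec ρ c)]
  exact h

lemma cc3_rep (hcc3 : CC3 k H C ρ) (c : C) :
    ∑ i ∈ rrep ρ c, ∑ q ∈ rrep ρ i.2, i.1 ⊗ₜ[k] (q.1 ⊗ₜ[k] q.2)
      = ∑ i ∈ rrep ρ c, ∑ n ∈ corep k i.1, n.1 ⊗ₜ[k] (n.2 ⊗ₜ[k] i.2) := by
  have h := hcc3 c
  have hL : TensorProduct.map (LinearMap.id : H →ₗ[k] H) ρ (ρ c)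
      = ∑ i ∈ rrep ρ c, ∑ q ∈ rrep ρ i.2, i.1 ⊗ₜ[k] (q.1 ⊗ₜ[k] q.2) := by
    rw [rrep_spec ρ c, map_sum]
    refine Finset.sum_congr rfl fun i _ => ?_
    rw [TensorProduct.map_tmul, rrep_spec ρ i.2, TensorProduct.tmul_sum]
    simp
  have hR : TensorProduct.assoc k H H C
        (TensorProduct.map (Coalgebra.comul (R := k)) (LinearMap.id : C →ₗ[k] C) (ρ c))
      = ∑ i ∈ rrep ρ c, ∑ n ∈ corep k i.1, n.1 ⊗ₜ[k] (n.2 ⊗ₜ[k] i.2) := by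
    rw [rrep_spec ρ c, map_sum, map_sum]
    refine Finset.sum_congr rfl fun i _ => ?_
    rw [TensorProduct.map_tmul, corep_spec i.1, TensorProduct.sum_tmul, map_sum]
    simp
  rw [← hL, ← hR, h]

lemma cc2_rep (hcc2 : CC2 k H C ρ) (c : C) :
    ∑ i ∈ rrep ρ c, ∑ e ∈ corep k i.2, i.1 ⊗ₜ[k] (e.1 ⊗ₜ[k] e.2)
      = ∑ i ∈ corep k c, ∑ p ∈ rrep ρ i.1, ∑ q ∈ rrep ρ i.2,
          (p.1 * q.1) ⊗ₜ[k] (p.2 ⊗ₜ[k] q.2) := by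
  have h := hcc2 c
  have hL : TensorProduct.map (LinearMap.id : H →ₗ[k] H) (Coalgebra.comul (R := k)) (ρ c)
      = ∑ i ∈ rrep ρ c, ∑ e ∈ corep k i.2, i.1 ⊗ₜ[k] (e.1 ⊗ₜ[k] e.2) := by
    rw [rrep_spec ρ c, map_sum]
    refine Finset.sum_congr rfl fun i _ => ?_
    rw [TensorProduct.map_tmul, corep_spec i.2, TensorProduct.tmul_sum]
    simp
  have hR : mixHC k H C (TensorProduct.map ρ ρ (Coalgebra.comul (R := k) c))
      = ∑ i ∈ corep k c, ∑ p ∈ rrep ρ i.1, ∑ q ∈ rrep ρ i.2,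
          (p.1 * q.1) ⊗ₜ[k] (p.2 ⊗ₜ[k] q.2) := by
    rw [corep_spec c, map_sum, map_sum]
    refine Finset.sum_congr rfl fun i _ => ?_
    rw [TensorProduct.map_tmul, rrep_spec ρ i.1, rrep_spec ρ i.2,
      TensorProduct.sum_tmul]
    rw [map_sum]
    refine Finset.sum_congr rfl fun p _ => ?_
    rw [TensorProduct.tmul_sum, map_sum]
    refine Finset.sum_congr rfl fun q _ => ?_
    simp [mixHC, LinearMap.mul'_apply]
  rw [← hL, ← hR, h]

/-- L3: `(id ⊗ r)(ρ c) = Δ(r c)` -/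
lemma cc3_rmap (hcc3 : CC3 k H C ρ) (c : C) :
    ∑ q ∈ rrep ρ c, q.1 ⊗ₜ[k] rmap ρ q.2
      = Coalgebra.comul (R := k) (rmap ρ c) := by
  have h := cc3_rep ρ hcc3 c
  set M : H ⊗[k] (H ⊗[k] C) →ₗ[k] H ⊗[k] H :=
    LinearMap.lTensor H ((TensorProduct.rid k H).toLinearMap
      ∘ₗ TensorProduct.map (LinearMap.id : H →ₗ[k] H) (Coalgebra.counit : C →ₗ[k] k)) with hM
  have h2 := congrArg M h
  simp only [map_sum, hM, LinearMap.lTensor_tmul, LinearMap.coe_comp, Function.comp_apply,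
    TensorProduct.map_tmul, LinearMap.id_coe, id_eq, LinearEquiv.coe_coe,
    TensorProduct.rid_tmul] at h2
  have e1 : ∑ i ∈ rrep ρ c, i.1 ⊗ₜ[k] rmap ρ i.2
      = ∑ i ∈ rrep ρ c, ∑ q ∈ rrep ρ i.2, i.1 ⊗ₜ[k] (Coalgebra.counit (R := k) q.2 • q.1) := by
    refine Finset.sum_congr rfl fun i _ => ?_
    rw [rmap_apply ρ (rrep_spec ρ i.2), TensorProduct.tmul_sum]
  have e2 : Coalgebra.comul (R := k) (rmap ρ c)
      = ∑ i ∈ rrep ρ c, ∑ n ∈ corep k i.1,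
          n.1 ⊗ₜ[k] (Coalgebra.counit (R := k) i.2 • n.2) := by
    rw [rmap_apply ρ (rrep_spec ρ c), map_sum]
    refine Finset.sum_congr rfl fun i _ => ?_
    rw [map_smul, corep_spec i.1, Finset.smul_sum]
    exact Finset.sum_congr rfl fun n _ => by rw [TensorProduct.tmul_smul]
  rw [e1, e2]
  exact h2

/-- L2: `∑ c₁⁽⁻¹⁾ r(c₂) ⊗ c₁⁽⁰⁾ = ρ c` -/
lemma cc2_rmap (hcc2 : CC2 k H C ρ) (c : C) :
    ∑ i ∈ corep k c, ∑ p ∈ rrep ρ i.1, (p.1 * rmap ρ i.2) ⊗ₜ[k] p.2 = ρ c := by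
  have h := cc2_rep ρ hcc2 c
  set N : H ⊗[k] (C ⊗[k] C) →ₗ[k] H ⊗[k] C :=
    LinearMap.lTensor H ((TensorProduct.rid k C).toLinearMap
      ∘ₗ TensorProduct.map (LinearMap.id : C →ₗ[k] C) (Coalgebra.counit : C →ₗ[k] k)) with hN
  have h2 := congrArg N h
  simp only [map_sum, hN, LinearMap.lTensor_tmul, LinearMap.coe_comp, Function.comp_apply,
    TensorProduct.map_tmul, LinearMap.id_coe, id_eq, LinearEquiv.coe_coe,
    TensorProduct.rid_tmul] at h2
  have e1 : ∑ i ∈ rrep ρ c, ∑ e ∈ corep k i.2,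
        i.1 ⊗ₜ[k] (Coalgebra.counit (R := k) e.2 • e.1) = ρ c := by
    rw [rrep_spec ρ c]
    refine Finset.sum_congr rfl fun i _ => ?_
    rw [← TensorProduct.tmul_sum, counit_right (corep_spec i.2)]
  have e2 : ∑ i ∈ corep k c, ∑ p ∈ rrep ρ i.1, ∑ q ∈ rrep ρ i.2,
        (p.1 * q.1) ⊗ₜ[k] (Coalgebra.counit (R := k) q.2 • p.2)
      = ∑ i ∈ corep k c, ∑ p ∈ rrep ρ i.1, (p.1 * rmap ρ i.2) ⊗ₜ[k] p.2 := by
    refine Finset.sum_congr rfl fun i _ => Finset.sum_congr rfl fun p _ => ?_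
    rw [rmap_apply ρ (rrep_spec ρ i.2), Finset.mul_sum, TensorProduct.sum_tmul]
    refine Finset.sum_congr rfl fun q _ => ?_
    rw [TensorProduct.tmul_smul, mul_smul_comm, TensorProduct.smul_tmul']
  rw [← e2, ← e1]
  exact h2.symm

/-- L1: `∑ ε_C(c₁⁽⁰⁾) c₁⁽⁻¹⁾c₂⁽⁻¹⁾ ⊗ c₂⁽⁰⁾ = ρ c` -/
lemma cc2_eps (hcc2 : CC2 k H C ρ) (c : C) :
    ∑ i ∈ corep k c, ∑ p ∈ rrep ρ i.1, ∑ q ∈ rrep ρ i.2,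
        Coalgebra.counit (R := k) p.2 • ((p.1 * q.1) ⊗ₜ[k] q.2) = ρ c := by
  have h := cc2_rep ρ hcc2 c
  set N : H ⊗[k] (C ⊗[k] C) →ₗ[k] H ⊗[k] C :=
    LinearMap.lTensor H ((TensorProduct.lid k C).toLinearMap
      ∘ₗ TensorProduct.map (Coalgebra.counit : C →ₗ[k] k) (LinearMap.id : C →ₗ[k] C)) with hN
  have h2 := congrArg N h
  simp only [map_sum, hN, LinearMap.lTensor_tmul, LinearMap.coe_comp, Function.comp_apply,
    TensorProduct.map_tmul, LinearMap.id_coe, id_eq, LinearEquiv.coe_coe,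
    TensorProduct.lid_tmul] at h2
  have e1 : ∑ i ∈ rrep ρ c, ∑ e ∈ corep k i.2,
        i.1 ⊗ₜ[k] (Coalgebra.counit (R := k) e.1 • e.2) = ρ c := by
    rw [rrep_spec ρ c]
    refine Finset.sum_congr rfl fun i _ => ?_
    rw [← TensorProduct.tmul_sum, counit_left (corep_spec i.2)]
  have e2 : ∑ i ∈ corep k c, ∑ p ∈ rrep ρ i.1, ∑ q ∈ rrep ρ i.2,
        (p.1 * q.1) ⊗ₜ[k] (Coalgebra.counit (R := k) p.2 • q.2)
      = ∑ i ∈ corep k c, ∑ p ∈ rrep ρ i.1, ∑ q ∈ rrep ρ i.2,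
        Coalgebra.counit (R := k) p.2 • ((p.1 * q.1) ⊗ₜ[k] q.2) := by
    refine Finset.sum_congr rfl fun i _ => Finset.sum_congr rfl fun p _ =>
      Finset.sum_congr rfl fun q _ => ?_
    rw [TensorProduct.tmul_smul]
  rw [← e2, ← e1]
  exact h2.symm

lemma smashP_apply (c : C) (h : H) :
    smashP k H C ρ (c ⊗ₜ[k] h)
      = ∑ i ∈ rrep ρ c, ∑ j ∈ corep k h,
          Coalgebra.counit (R := k) (i.1 * j.1) • (i.2 ⊗ₜ[k] j.2) := by
  simp only [smashP, LinearMap.coe_comp, Function.comp_apply, LinearEquiv.coe_coe,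
    TensorProduct.map_tmul]
  rw [rrep_spec ρ c, corep_spec h, TensorProduct.sum_tmul]
  rw [map_sum, map_sum, map_sum]
  refine Finset.sum_congr rfl fun i _ => ?_
  rw [TensorProduct.tmul_sum, map_sum, map_sum, map_sum]
  refine Finset.sum_congr rfl fun j _ => ?_
  simp [TensorProduct.tensorTensorTensorComm_tmul, LinearMap.mul'_apply]

lemma smashCounit_apply (c : C) (h : H) :
    smashCounit k H C ρ (c ⊗ₜ[k] h)
      = ∑ i ∈ rrep ρ c,
          Coalgebra.counit (R := k) i.2 * Coalgebra.counit (R := k) (i.1 * h) := by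
  simp only [smashCounit, LinearMap.coe_comp, Function.comp_apply, LinearEquiv.coe_coe,
    TensorProduct.map_tmul, LinearMap.id_coe, id_eq]
  rw [rrep_spec ρ c, map_sum, TensorProduct.sum_tmul, map_sum, map_sum, map_sum]
  refine Finset.sum_congr rfl fun i _ => ?_
  simp [LinearMap.mul'_apply, TensorProduct.comm_tmul, smul_eq_mul]

lemma smashComul_apply (c : C) (h : H) :
    smashComul k H C ρ (c ⊗ₜ[k] h)
      = ∑ i ∈ corep k c, ∑ p ∈ rrep ρ i.2, ∑ j ∈ corep k h,
          (i.1 ⊗ₜ[k] (p.1 * j.1)) ⊗ₜ[k] (p.2 ⊗ₜ[k] j.2) := by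
  simp only [smashComul, LinearMap.coe_comp, Function.comp_apply, LinearEquiv.coe_coe,
    TensorProduct.map_tmul]
  have e1 : (TensorProduct.assoc k C H C).symm
      (TensorProduct.map (LinearMap.id : C →ₗ[k] C) ρ (Coalgebra.comul (R := k) c))
      = ∑ i ∈ corep k c, ∑ p ∈ rrep ρ i.2, (i.1 ⊗ₜ[k] p.1) ⊗ₜ[k] p.2 := by
    rw [corep_spec c, map_sum, map_sum]
    refine Finset.sum_congr rfl fun i _ => ?_
    rw [TensorProduct.map_tmul, rrep_spec ρ i.2, TensorProduct.tmul_sum, map_sum]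
    simp
  rw [e1, corep_spec h, TensorProduct.sum_tmul, map_sum, map_sum]
  refine Finset.sum_congr rfl fun i _ => ?_
  rw [TensorProduct.sum_tmul, map_sum, map_sum]
  refine Finset.sum_congr rfl fun p _ => ?_
  rw [TensorProduct.tmul_sum, map_sum, map_sum]
  refine Finset.sum_congr rfl fun j _ => ?_
  simp [TensorProduct.tensorTensorTensorComm_tmul, LinearMap.mul'_apply]

lemma goalL (hcc2 : CC2 k H C ρ) (c : C) (h : H) :
    TensorProduct.lid k (C ⊗[k] H)
      (TensorProduct.map (smashCounit k H C ρ) (LinearMap.id : C ⊗[k] H →ₗ[k] C ⊗[k] H)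
        (smashComul k H C ρ (c ⊗ₜ[k] h)))
    = smashP k H C ρ (c ⊗ₜ[k] h) := by
  set Φ : H ⊗[k] C →ₗ[k] C ⊗[k] H :=
    ∑ j ∈ corep k h, (TensorProduct.lid k (C ⊗[k] H)).toLinearMap
      ∘ₗ TensorProduct.map ((Coalgebra.counit : H →ₗ[k] k) ∘ₗ LinearMap.mulRight k j.1)
          ((TensorProduct.mk k C H).flip j.2) with hΦ
  have hΦt : ∀ (a : H) (d : C), Φ (a ⊗ₜ[k] d)
      = ∑ j ∈ corep k h, Coalgebra.counit (R := k) (a * j.1) • (d ⊗ₜ[k] j.2) := by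
    intro a d
    simp [hΦ, LinearMap.sum_apply]
  have hP : Φ (ρ c) = smashP k H C ρ (c ⊗ₜ[k] h) := by
    rw [rrep_spec ρ c, map_sum, smashP_apply]
    exact Finset.sum_congr rfl fun i _ => hΦt i.1 i.2
  have hkey := congrArg Φ (cc2_eps ρ hcc2 c)
  rw [hP] at hkey
  have hR : Φ (∑ i ∈ corep k c, ∑ p ∈ rrep ρ i.1, ∑ q ∈ rrep ρ i.2,
        Coalgebra.counit (R := k) p.2 • ((p.1 * q.1) ⊗ₜ[k] q.2))
      = ∑ i ∈ corep k c, ∑ p ∈ rrep ρ i.1, ∑ q ∈ rrep ρ i.2, ∑ j ∈ corep k h,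
          (Coalgebra.counit (R := k) p.2 * Coalgebra.counit (R := k) (p.1 * q.1 * j.1))
            • (q.2 ⊗ₜ[k] j.2) := by
    rw [map_sum]
    refine Finset.sum_congr rfl fun i _ => ?_
    rw [map_sum]
    refine Finset.sum_congr rfl fun p _ => ?_
    rw [map_sum]
    refine Finset.sum_congr rfl fun q _ => ?_
    rw [map_smul, hΦt, Finset.smul_sum]
    refine Finset.sum_congr rfl fun j _ => ?_
    rw [smul_smul]
  have hL : TensorProduct.lid k (C ⊗[k] H)
      (TensorProduct.map (smashCounit k H C ρ) (LinearMap.id : C ⊗[k] H →ₗ[k] C ⊗[k] H)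
        (smashComul k H C ρ (c ⊗ₜ[k] h)))
      = ∑ i ∈ corep k c, ∑ p ∈ rrep ρ i.1, ∑ q ∈ rrep ρ i.2, ∑ j ∈ corep k h,
          (Coalgebra.counit (R := k) p.2 * Coalgebra.counit (R := k) (p.1 * q.1 * j.1))
            • (q.2 ⊗ₜ[k] j.2) := by
    rw [smashComul_apply]
    simp only [map_sum]
    refine Finset.sum_congr rfl fun i _ => ?_
    have e1 : ∀ q ∈ rrep ρ i.2, ∀ j ∈ corep k h,
        TensorProduct.lid k (C ⊗[k] H)
          (TensorProduct.map (smashCounit k H C ρ) (LinearMap.id : C ⊗[k] H →ₗ[k] C ⊗[k] H)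
            ((i.1 ⊗ₜ[k] (q.1 * j.1)) ⊗ₜ[k] (q.2 ⊗ₜ[k] j.2)))
        = ∑ p ∈ rrep ρ i.1,
            (Coalgebra.counit (R := k) p.2 * Coalgebra.counit (R := k) (p.1 * q.1 * j.1))
              • (q.2 ⊗ₜ[k] j.2) := by
      intro q _ j _
      rw [TensorProduct.map_tmul]
      simp only [LinearMap.id_coe, id_eq, TensorProduct.lid_tmul]
      rw [smashCounit_apply, Finset.sum_smul]
      exact Finset.sum_congr rfl fun p _ => by rw [mul_assoc p.1]
    calc ∑ q ∈ rrep ρ i.2, ∑ j ∈ corep k h,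
          TensorProduct.lid k (C ⊗[k] H)
            (TensorProduct.map (smashCounit k H C ρ) (LinearMap.id : C ⊗[k] H →ₗ[k] C ⊗[k] H)
              ((i.1 ⊗ₜ[k] (q.1 * j.1)) ⊗ₜ[k] (q.2 ⊗ₜ[k] j.2)))
        = ∑ q ∈ rrep ρ i.2, ∑ j ∈ corep k h, ∑ p ∈ rrep ρ i.1,
            (Coalgebra.counit (R := k) p.2 * Coalgebra.counit (R := k) (p.1 * q.1 * j.1))
              • (q.2 ⊗ₜ[k] j.2) :=
          Finset.sum_congr rfl fun q hq => Finset.sum_congr rfl fun j hj => e1 q hq j hj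
      _ = ∑ q ∈ rrep ρ i.2, ∑ p ∈ rrep ρ i.1, ∑ j ∈ corep k h,
            (Coalgebra.counit (R := k) p.2 * Coalgebra.counit (R := k) (p.1 * q.1 * j.1))
              • (q.2 ⊗ₜ[k] j.2) :=
          Finset.sum_congr rfl fun q _ => Finset.sum_comm
      _ = ∑ p ∈ rrep ρ i.1, ∑ q ∈ rrep ρ i.2, ∑ j ∈ corep k h,
            (Coalgebra.counit (R := k) p.2 * Coalgebra.counit (R := k) (p.1 * q.1 * j.1))
              • (q.2 ⊗ₜ[k] j.2) := Finset.sum_comm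
  rw [hL, ← hR]
  exact hkey

lemma PP (hmul : ∀ a b : H,
      Coalgebra.comul (R := k) (a * b) = Coalgebra.comul a * Coalgebra.comul b)
    (hcc3 : CC3 k H C ρ) (c : C) (h : H) :
    smashP k H C ρ (smashP k H C ρ (c ⊗ₜ[k] h)) = smashP k H C ρ (c ⊗ₜ[k] h) := by
  have hεH := fun (a : H) => (Coalgebra.counit : H →ₗ[k] k) a
  -- expand P²
  have e0 : smashP k H C ρ (smashP k H C ρ (c ⊗ₜ[k] h))
      = ∑ i ∈ rrep ρ c, ∑ q ∈ rrep ρ i.2, ∑ j ∈ corep k h, ∑ m ∈ corep k j.2,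
          (Coalgebra.counit (R := k) (i.1 * j.1) * Coalgebra.counit (R := k) (q.1 * m.1))
            • (q.2 ⊗ₜ[k] m.2) := by
    rw [smashP_apply, map_sum]
    refine Finset.sum_congr rfl fun i _ => ?_
    rw [map_sum]
    have e1 : ∀ j ∈ corep k h,
        smashP k H C ρ (Coalgebra.counit (R := k) (i.1 * j.1) • (i.2 ⊗ₜ[k] j.2))
          = ∑ q ∈ rrep ρ i.2, ∑ m ∈ corep k j.2,
              (Coalgebra.counit (R := k) (i.1 * j.1) * Coalgebra.counit (R := k) (q.1 * m.1))
                • (q.2 ⊗ₜ[k] m.2) := by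
      intro j _
      rw [map_smul, smashP_apply, Finset.smul_sum]
      refine Finset.sum_congr rfl fun q _ => ?_
      rw [Finset.smul_sum]
      refine Finset.sum_congr rfl fun m _ => ?_
      rw [smul_smul]
    rw [Finset.sum_congr rfl e1]
    exact Finset.sum_comm
  -- step A : coassociativity on the h side
  have eA : ∀ (i q : H × C),
      ∑ j ∈ corep k h, ∑ m ∈ corep k j.2,
          (Coalgebra.counit (R := k) (i.1 * j.1) * Coalgebra.counit (R := k) (q.1 * m.1))
            • (q.2 ⊗ₜ[k] m.2)
      = ∑ j ∈ corep k h, ∑ n ∈ corep k j.1,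
          (Coalgebra.counit (R := k) (i.1 * n.1) * Coalgebra.counit (R := k) (q.1 * n.2))
            • (q.2 ⊗ₜ[k] j.2) := by
    intro i q
    set Θ : H ⊗[k] (H ⊗[k] H) →ₗ[k] C ⊗[k] H :=
      (TensorProduct.lid k (C ⊗[k] H)).toLinearMap
        ∘ₗ TensorProduct.map ((Coalgebra.counit : H →ₗ[k] k) ∘ₗ LinearMap.mulLeft k i.1)
            ((TensorProduct.lid k (C ⊗[k] H)).toLinearMap
              ∘ₗ TensorProduct.map ((Coalgebra.counit : H →ₗ[k] k) ∘ₗ LinearMap.mulLeft k q.1)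
                  (TensorProduct.mk k C H q.2)) with hΘ
    have hΘt : ∀ (α β γ : H), Θ (α ⊗ₜ[k] (β ⊗ₜ[k] γ))
        = (Coalgebra.counit (R := k) (i.1 * α) * Coalgebra.counit (R := k) (q.1 * β))
            • (q.2 ⊗ₜ[k] γ) := by
      intro α β γ
      simp [hΘ, smul_smul, mul_comm]
    have hkey := congrArg Θ (coassoc_rep (k := k) h)
    simp only [map_sum] at hkey
    calc ∑ j ∈ corep k h, ∑ m ∈ corep k j.2,
          (Coalgebra.counit (R := k) (i.1 * j.1) * Coalgebra.counit (R := k) (q.1 * m.1))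
            • (q.2 ⊗ₜ[k] m.2)
        = ∑ j ∈ corep k h, ∑ m ∈ corep k j.2, Θ (j.1 ⊗ₜ[k] (m.1 ⊗ₜ[k] m.2)) := by
          refine Finset.sum_congr rfl fun j _ => Finset.sum_congr rfl fun m _ => ?_
          rw [hΘt]
      _ = ∑ j ∈ corep k h, ∑ n ∈ corep k j.1, Θ (n.1 ⊗ₜ[k] (n.2 ⊗ₜ[k] j.2)) := hkey
      _ = ∑ j ∈ corep k h, ∑ n ∈ corep k j.1,
          (Coalgebra.counit (R := k) (i.1 * n.1) * Coalgebra.counit (R := k) (q.1 * n.2))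
            • (q.2 ⊗ₜ[k] j.2) := by
          refine Finset.sum_congr rfl fun j _ => Finset.sum_congr rfl fun n _ => ?_
          rw [hΘt]
  -- step B : CC3
  have eB : ∀ (j n : H × H),
      ∑ i ∈ rrep ρ c, ∑ q ∈ rrep ρ i.2,
          (Coalgebra.counit (R := k) (i.1 * n.1) * Coalgebra.counit (R := k) (q.1 * n.2))
            • (q.2 ⊗ₜ[k] j.2)
      = ∑ i ∈ rrep ρ c, ∑ w ∈ corep k i.1,
          (Coalgebra.counit (R := k) (w.1 * n.1) * Coalgebra.counit (R := k) (w.2 * n.2))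
            • (i.2 ⊗ₜ[k] j.2) := by
    intro j n
    set Ψ : H ⊗[k] (H ⊗[k] C) →ₗ[k] C ⊗[k] H :=
      (TensorProduct.lid k (C ⊗[k] H)).toLinearMap
        ∘ₗ TensorProduct.map ((Coalgebra.counit : H →ₗ[k] k) ∘ₗ LinearMap.mulRight k n.1)
            ((TensorProduct.lid k (C ⊗[k] H)).toLinearMap
              ∘ₗ TensorProduct.map ((Coalgebra.counit : H →ₗ[k] k) ∘ₗ LinearMap.mulRight k n.2)
                  ((TensorProduct.mk k C H).flip j.2)) with hΨ
    have hΨt : ∀ (α β : H) (d : C), Ψ (α ⊗ₜ[k] (β ⊗ₜ[k] d))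
        = (Coalgebra.counit (R := k) (α * n.1) * Coalgebra.counit (R := k) (β * n.2))
            • (d ⊗ₜ[k] j.2) := by
      intro α β d
      simp [hΨ, smul_smul, mul_comm]
    have hkey := congrArg Ψ (cc3_rep ρ hcc3 c)
    simp only [map_sum] at hkey
    calc ∑ i ∈ rrep ρ c, ∑ q ∈ rrep ρ i.2,
          (Coalgebra.counit (R := k) (i.1 * n.1) * Coalgebra.counit (R := k) (q.1 * n.2))
            • (q.2 ⊗ₜ[k] j.2)
        = ∑ i ∈ rrep ρ c, ∑ q ∈ rrep ρ i.2, Ψ (i.1 ⊗ₜ[k] (q.1 ⊗ₜ[k] q.2)) := by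
          refine Finset.sum_congr rfl fun i _ => Finset.sum_congr rfl fun q _ => ?_
          rw [hΨt]
      _ = ∑ i ∈ rrep ρ c, ∑ w ∈ corep k i.1, Ψ (w.1 ⊗ₜ[k] (w.2 ⊗ₜ[k] i.2)) := hkey
      _ = ∑ i ∈ rrep ρ c, ∑ w ∈ corep k i.1,
          (Coalgebra.counit (R := k) (w.1 * n.1) * Coalgebra.counit (R := k) (w.2 * n.2))
            • (i.2 ⊗ₜ[k] j.2) := by
          refine Finset.sum_congr rfl fun i _ => Finset.sum_congr rfl fun w _ => ?_
          rw [hΨt]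
  -- assemble
  rw [e0, smashP_apply]
  calc ∑ i ∈ rrep ρ c, ∑ q ∈ rrep ρ i.2, ∑ j ∈ corep k h, ∑ m ∈ corep k j.2,
        (Coalgebra.counit (R := k) (i.1 * j.1) * Coalgebra.counit (R := k) (q.1 * m.1))
          • (q.2 ⊗ₜ[k] m.2)
      = ∑ i ∈ rrep ρ c, ∑ q ∈ rrep ρ i.2, ∑ j ∈ corep k h, ∑ n ∈ corep k j.1,
        (Coalgebra.counit (R := k) (i.1 * n.1) * Coalgebra.counit (R := k) (q.1 * n.2))
          • (q.2 ⊗ₜ[k] j.2) :=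
        Finset.sum_congr rfl fun i _ => Finset.sum_congr rfl fun q _ => eA i q
    _ = ∑ j ∈ corep k h, ∑ n ∈ corep k j.1, ∑ i ∈ rrep ρ c, ∑ q ∈ rrep ρ i.2,
        (Coalgebra.counit (R := k) (i.1 * n.1) * Coalgebra.counit (R := k) (q.1 * n.2))
          • (q.2 ⊗ₜ[k] j.2) := sum_swap4 _ _ _ _ _
    _ = ∑ j ∈ corep k h, ∑ n ∈ corep k j.1, ∑ i ∈ rrep ρ c, ∑ w ∈ corep k i.1,
        (Coalgebra.counit (R := k) (w.1 * n.1) * Coalgebra.counit (R := k) (w.2 * n.2))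
          • (i.2 ⊗ₜ[k] j.2) :=
        Finset.sum_congr rfl fun j _ => Finset.sum_congr rfl fun n _ => eB j n
    _ = ∑ i ∈ rrep ρ c, ∑ j ∈ corep k h, ∑ w ∈ corep k i.1, ∑ n ∈ corep k j.1,
        (Coalgebra.counit (R := k) (w.1 * n.1) * Coalgebra.counit (R := k) (w.2 * n.2))
          • (i.2 ⊗ₜ[k] j.2) := by
        rw [sum_swap4, sum_mix4]
    _ = ∑ i ∈ rrep ρ c, ∑ j ∈ corep k h,
        Coalgebra.counit (R := k) (i.1 * j.1) • (i.2 ⊗ₜ[k] j.2) := by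
        refine Finset.sum_congr rfl fun i _ => Finset.sum_congr rfl fun j _ => ?_
        rw [← eps_mul hmul (corep_spec i.1) (corep_spec j.1)]
        rw [Finset.sum_smul]
        exact Finset.sum_congr rfl fun w _ => by rw [Finset.sum_smul]

lemma goalR (hmul : ∀ a b : H,
      Coalgebra.comul (R := k) (a * b) = Coalgebra.comul a * Coalgebra.comul b)
    (hcc3 : CC3 k H C ρ) (c : C) (h : H) :
    TensorProduct.rid k (C ⊗[k] H)
      (TensorProduct.map (LinearMap.id : C ⊗[k] H →ₗ[k] C ⊗[k] H) (smashCounit k H C ρ)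
        (smashComul k H C ρ (c ⊗ₜ[k] h)))
    = ∑ i ∈ corep k c, i.1 ⊗ₜ[k] (rmap ρ i.2 * h) := by
  rw [smashComul_apply]
  simp only [map_sum]
  refine Finset.sum_congr rfl fun i _ => ?_
  -- the contraction map
  set Ξ : H ⊗[k] (H ⊗[k] C) →ₗ[k] C ⊗[k] H :=
    ∑ j ∈ corep k h, (TensorProduct.mk k C H i.1)
      ∘ₗ (TensorProduct.rid k H).toLinearMap
      ∘ₗ LinearMap.lTensor H (TensorProduct.lid k k).toLinearMap
      ∘ₗ TensorProduct.map (LinearMap.mulRight k j.1)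
          (TensorProduct.map ((Coalgebra.counit : H →ₗ[k] k) ∘ₗ LinearMap.mulRight k j.2)
            (Coalgebra.counit : C →ₗ[k] k)) with hΞ
  have hΞt : ∀ (α β : H) (d : C), Ξ (α ⊗ₜ[k] (β ⊗ₜ[k] d))
      = ∑ j ∈ corep k h,
          (Coalgebra.counit (R := k) (β * j.2) * Coalgebra.counit (R := k) d)
            • (i.1 ⊗ₜ[k] (α * j.1)) := by
    intro α β d
    simp [hΞ, LinearMap.sum_apply, TensorProduct.smul_tmul', smul_smul,
      TensorProduct.tmul_smul, mul_comm]
  have hkey := congrArg Ξ (cc3_rep ρ hcc3 i.2)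
  simp only [map_sum] at hkey
  have eL : ∑ p ∈ rrep ρ i.2, ∑ j ∈ corep k h,
        TensorProduct.rid k (C ⊗[k] H)
          (TensorProduct.map (LinearMap.id : C ⊗[k] H →ₗ[k] C ⊗[k] H) (smashCounit k H C ρ)
            ((i.1 ⊗ₜ[k] (p.1 * j.1)) ⊗ₜ[k] (p.2 ⊗ₜ[k] j.2)))
      = ∑ p ∈ rrep ρ i.2, ∑ q ∈ rrep ρ p.2, Ξ (p.1 ⊗ₜ[k] (q.1 ⊗ₜ[k] q.2)) := by
    refine Finset.sum_congr rfl fun p _ => ?_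
    have e1 : ∀ j ∈ corep k h,
        TensorProduct.rid k (C ⊗[k] H)
          (TensorProduct.map (LinearMap.id : C ⊗[k] H →ₗ[k] C ⊗[k] H) (smashCounit k H C ρ)
            ((i.1 ⊗ₜ[k] (p.1 * j.1)) ⊗ₜ[k] (p.2 ⊗ₜ[k] j.2)))
        = ∑ q ∈ rrep ρ p.2,
            (Coalgebra.counit (R := k) (q.1 * j.2) * Coalgebra.counit (R := k) q.2)
              • (i.1 ⊗ₜ[k] (p.1 * j.1)) := by
      intro j _
      rw [TensorProduct.map_tmul]
      simp only [LinearMap.id_coe, id_eq, TensorProduct.rid_tmul]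
      rw [smashCounit_apply, Finset.sum_smul]
      exact Finset.sum_congr rfl fun q _ => by rw [mul_comm]
    rw [Finset.sum_congr rfl e1, Finset.sum_comm]
    refine Finset.sum_congr rfl fun q _ => ?_
    rw [hΞt]
  rw [eL, hkey]
  have eR : ∀ p ∈ rrep ρ i.2, ∑ n ∈ corep k p.1, Ξ (n.1 ⊗ₜ[k] (n.2 ⊗ₜ[k] p.2))
      = Coalgebra.counit (R := k) p.2 • (i.1 ⊗ₜ[k] (p.1 * h)) := by
    intro p _
    have e2 : ∀ n ∈ corep k p.1, Ξ (n.1 ⊗ₜ[k] (n.2 ⊗ₜ[k] p.2))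
        = Coalgebra.counit (R := k) p.2
            • ∑ j ∈ corep k h,
                Coalgebra.counit (R := k) (n.2 * j.2) • (i.1 ⊗ₜ[k] (n.1 * j.1)) := by
      intro n _
      rw [hΞt, Finset.smul_sum]
      exact Finset.sum_congr rfl fun j _ => by rw [smul_smul, mul_comm]
    rw [Finset.sum_congr rfl e2, ← Finset.smul_sum]
    congr 1
    have e3 : ∑ n ∈ corep k p.1, ∑ j ∈ corep k h,
          Coalgebra.counit (R := k) (n.2 * j.2) • (i.1 ⊗ₜ[k] (n.1 * j.1))
        = i.1 ⊗ₜ[k] ∑ n ∈ corep k p.1, ∑ j ∈ corep k h,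
            Coalgebra.counit (R := k) (n.2 * j.2) • (n.1 * j.1) := by
      rw [TensorProduct.tmul_sum]
      refine Finset.sum_congr rfl fun n _ => ?_
      rw [TensorProduct.tmul_sum]
      exact Finset.sum_congr rfl fun j _ => by rw [TensorProduct.tmul_smul]
    rw [e3, mul_rep_counit hmul p.1 h]
  rw [Finset.sum_congr rfl eR]
  have e4 : ∑ p ∈ rrep ρ i.2, Coalgebra.counit (R := k) p.2 • (i.1 ⊗ₜ[k] (p.1 * h))
      = i.1 ⊗ₜ[k] ∑ p ∈ rrep ρ i.2, Coalgebra.counit (R := k) p.2 • (p.1 * h) := by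
    rw [TensorProduct.tmul_sum]
    exact Finset.sum_congr rfl fun p _ => by rw [TensorProduct.tmul_smul]
  rw [e4, rmap_apply ρ (rrep_spec ρ i.2), Finset.sum_mul]
  congr 1
  exact Finset.sum_congr rfl fun p _ => by rw [smul_mul_assoc]

lemma QP (hmul : ∀ a b : H,
      Coalgebra.comul (R := k) (a * b) = Coalgebra.comul a * Coalgebra.comul b)
    (hwb5 : (TensorProduct.assoc k H H H (Coalgebra.comul (R := k) (1 : H) ⊗ₜ[k] (1 : H))) *
      ((1 : H) ⊗ₜ[k] Coalgebra.comul (R := k) (1 : H))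
    = TensorProduct.assoc k H H H
        (TensorProduct.map (Coalgebra.comul (R := k)) (LinearMap.id : H →ₗ[k] H)
          (Coalgebra.comul (R := k) (1 : H))))
    (hcc2 : CC2 k H C ρ) (hcc3 : CC3 k H C ρ) (hcc4 : CC4 k H C ρ) (c : C) (h : H) :
    ∑ i ∈ rrep ρ c, ∑ j ∈ corep k h,
        Coalgebra.counit (R := k) (i.1 * j.1)
          • ∑ e ∈ corep k i.2, e.1 ⊗ₜ[k] (rmap ρ e.2 * j.2)
      = smashP k H C ρ (c ⊗ₜ[k] h) := by
  -- the contraction map Λ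
  set Λ : H ⊗[k] (C ⊗[k] H) →ₗ[k] C ⊗[k] H :=
    ∑ j ∈ corep k h, (TensorProduct.lid k (C ⊗[k] H)).toLinearMap
      ∘ₗ TensorProduct.map ((Coalgebra.counit : H →ₗ[k] k) ∘ₗ LinearMap.mulRight k j.1)
          (LinearMap.lTensor C (LinearMap.mulRight k j.2)) with hΛ
  have hΛt : ∀ (α : H) (d : C) (β : H), Λ (α ⊗ₜ[k] (d ⊗ₜ[k] β))
      = ∑ j ∈ corep k h, Coalgebra.counit (R := k) (α * j.1) • (d ⊗ₜ[k] (β * j.2)) := by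
    intro α d β
    simp [hΛ, LinearMap.sum_apply]
  -- step 0 : goal LHS = Λ applied to X1
  have e0 : ∑ i ∈ rrep ρ c, ∑ j ∈ corep k h,
        Coalgebra.counit (R := k) (i.1 * j.1)
          • ∑ e ∈ corep k i.2, e.1 ⊗ₜ[k] (rmap ρ e.2 * j.2)
      = ∑ i ∈ rrep ρ c, ∑ e ∈ corep k i.2, Λ (i.1 ⊗ₜ[k] (e.1 ⊗ₜ[k] rmap ρ e.2)) := by
    refine Finset.sum_congr rfl fun i _ => ?_
    have expand : ∀ j ∈ corep k h,
        Coalgebra.counit (R := k) (i.1 * j.1)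
            • ∑ e ∈ corep k i.2, e.1 ⊗ₜ[k] (rmap ρ e.2 * j.2)
          = ∑ e ∈ corep k i.2,
              Coalgebra.counit (R := k) (i.1 * j.1) • (e.1 ⊗ₜ[k] (rmap ρ e.2 * j.2)) :=
      fun j _ => Finset.smul_sum
    rw [Finset.sum_congr rfl expand, Finset.sum_comm]
    exact Finset.sum_congr rfl fun e _ => (hΛt i.1 e.1 (rmap ρ e.2)).symm
  -- step 1 : CC2 mapped by rmap on the last leg
  have e1 : ∑ i ∈ rrep ρ c, ∑ e ∈ corep k i.2, i.1 ⊗ₜ[k] (e.1 ⊗ₜ[k] rmap ρ e.2)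
      = ∑ i ∈ corep k c, ∑ p ∈ rrep ρ i.1, ∑ q ∈ rrep ρ i.2,
          (p.1 * q.1) ⊗ₜ[k] (p.2 ⊗ₜ[k] rmap ρ q.2) := by
    have := congrArg (LinearMap.lTensor H (LinearMap.lTensor C (rmap ρ)))
      (cc2_rep ρ hcc2 c)
    simpa only [map_sum, LinearMap.lTensor_tmul] using this
  -- step 2+3+4 : per (i, p) inner computation
  have hstep : ∀ (i : C × C) (p : H × C),
      ∑ q ∈ rrep ρ i.2, Λ ((p.1 * q.1) ⊗ₜ[k] (p.2 ⊗ₜ[k] rmap ρ q.2))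
        = ∑ j ∈ corep k h,
            Coalgebra.counit (R := k) ((p.1 * rmap ρ i.2) * j.1) • (p.2 ⊗ₜ[k] j.2) := by
    intro i p
    set z : H := epsT k H (rmap ρ i.2) with hzdef
    have eq2 : ∑ q ∈ rrep ρ i.2, q.1 ⊗ₜ[k] rmap ρ q.2
        = ∑ m ∈ corep k (1 : H), (z * m.1) ⊗ₜ[k] m.2 := by
      rw [cc3_rmap ρ hcc3 i.2, cc4_rmap ρ hcc4 i.2, epsT_comul hwb5,
        corep_spec (1 : H), Finset.mul_sum, ← hzdef]
      refine Finset.sum_congr rfl fun m _ => ?_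
      rw [Algebra.TensorProduct.tmul_mul_tmul, one_mul]
    set G : H ⊗[k] H →ₗ[k] C ⊗[k] H :=
      Λ ∘ₗ TensorProduct.map (LinearMap.mulLeft k p.1) (TensorProduct.mk k C H p.2) with hG
    have h3 := congrArg G eq2
    simp only [map_sum, hG, LinearMap.coe_comp, Function.comp_apply, TensorProduct.map_tmul,
      LinearMap.mulLeft_apply, TensorProduct.mk_apply] at h3
    -- h3 : Σ_q Λ((p.1*q.1) ⊗ (p.2 ⊗ rmap q.2)) = Σ_m Λ((p.1*(z*m.1)) ⊗ (p.2 ⊗ m.2))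
    rw [h3]
    have eΔ : ∑ m ∈ corep k (1 : H), ∑ j ∈ corep k h, (m.1 * j.1) ⊗ₜ[k] (m.2 * j.2)
        = ∑ j ∈ corep k h, j.1 ⊗ₜ[k] j.2 := by
      rw [← comul_mul_rep hmul (corep_spec (1 : H)) (corep_spec h), one_mul, corep_spec h]
    set Φ'' : H ⊗[k] H →ₗ[k] C ⊗[k] H :=
      (TensorProduct.lid k (C ⊗[k] H)).toLinearMap
        ∘ₗ TensorProduct.map ((Coalgebra.counit : H →ₗ[k] k) ∘ₗ LinearMap.mulLeft k (p.1 * z))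
            (TensorProduct.mk k C H p.2) with hΦ''
    have h4 := congrArg Φ'' eΔ
    simp only [map_sum, hΦ'', LinearMap.coe_comp, Function.comp_apply, TensorProduct.map_tmul,
      LinearEquiv.coe_coe, TensorProduct.lid_tmul, LinearMap.mulLeft_apply,
      TensorProduct.mk_apply] at h4
    have e5 : ∑ m ∈ corep k (1 : H), Λ ((p.1 * (z * m.1)) ⊗ₜ[k] (p.2 ⊗ₜ[k] m.2))
        = ∑ m ∈ corep k (1 : H), ∑ j ∈ corep k h,
            Coalgebra.counit (R := k) (p.1 * z * (m.1 * j.1)) • (p.2 ⊗ₜ[k] (m.2 * j.2)) := by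
      refine Finset.sum_congr rfl fun m _ => ?_
      rw [hΛt]
      refine Finset.sum_congr rfl fun j _ => ?_
      rw [mul_assoc, mul_assoc, mul_assoc]
    rw [e5, h4]
    refine Finset.sum_congr rfl fun j _ => ?_
    rw [hzdef, ← cc4_rmap ρ hcc4 i.2]
  -- final : L2
  set Φ : H ⊗[k] C →ₗ[k] C ⊗[k] H :=
    ∑ j ∈ corep k h, (TensorProduct.lid k (C ⊗[k] H)).toLinearMap
      ∘ₗ TensorProduct.map ((Coalgebra.counit : H →ₗ[k] k) ∘ₗ LinearMap.mulRight k j.1)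
          ((TensorProduct.mk k C H).flip j.2) with hΦ
  have hΦt : ∀ (a : H) (d : C), Φ (a ⊗ₜ[k] d)
      = ∑ j ∈ corep k h, Coalgebra.counit (R := k) (a * j.1) • (d ⊗ₜ[k] j.2) := by
    intro a d
    simp [hΦ, LinearMap.sum_apply]
  have hP : Φ (ρ c) = smashP k H C ρ (c ⊗ₜ[k] h) := by
    rw [rrep_spec ρ c, map_sum, smashP_apply]
    exact Finset.sum_congr rfl fun i _ => hΦt i.1 i.2
  have hfin := congrArg Φ (cc2_rmap ρ hcc2 c)
  rw [hP] at hfin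
  simp only [map_sum] at hfin
  have e1' := congrArg Λ e1
  simp only [map_sum] at e1'
  rw [e0, e1', ← hfin]
  refine Finset.sum_congr rfl fun i _ => Finset.sum_congr rfl fun p _ => ?_
  rw [hstep i p, hΦt]

end Comod

end WSCAux
end


noncomputable section
variable (k : Type*) [Field k]
variable (H : Type*) [Ring H] [Algebra k H] [Coalgebra k H]
variable (C : Type*) [AddCommGroup C] [Module k C] [Coalgebra k C]

/-- `ε̂` is a counit for `Δ̃` on the weak smash coproduct `C × H`. -/
theorem smashCounit_counit (S : H →ₗ[k] H) (hH : IsWeakHopfAlgebra k H S)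
    (ρ : C →ₗ[k] H ⊗[k] C) (hρ : IsComoduleCoalgebra k H C ρ) :
    ∀ (c : C) (h : H),
      TensorProduct.lid k (C ⊗[k] H)
          (TensorProduct.map (smashCounit k H C ρ)
            (LinearMap.id : C ⊗[k] H →ₗ[k] C ⊗[k] H)
            (smashComul k H C ρ (smashP k H C ρ (c ⊗ₜ[k] h))))
        = smashP k H C ρ (c ⊗ₜ[k] h)
      ∧ TensorProduct.rid k (C ⊗[k] H)
          (TensorProduct.map (LinearMap.id : C ⊗[k] H →ₗ[k] C ⊗[k] H)
            (smashCounit k H C ρ)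
            (smashComul k H C ρ (smashP k H C ρ (c ⊗ₜ[k] h))))
        = smashP k H C ρ (c ⊗ₜ[k] h) := by
  have hmul := hH.1.1
  have hwb5 := hH.1.2.2.2.2
  have hcc2 := hρ.2.1
  have hcc3 := hρ.2.2.1
  have hcc4 := hρ.2.2.2
  intro c h
  constructor
  · calc TensorProduct.lid k (C ⊗[k] H)
          (TensorProduct.map (smashCounit k H C ρ)
            (LinearMap.id : C ⊗[k] H →ₗ[k] C ⊗[k] H)
            (smashComul k H C ρ (smashP k H C ρ (c ⊗ₜ[k] h))))
        = ∑ i ∈ WSCAux.rrep ρ c, ∑ j ∈ WSCAux.corep k h,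
            Coalgebra.counit (R := k) (i.1 * j.1)
              • TensorProduct.lid k (C ⊗[k] H)
                  (TensorProduct.map (smashCounit k H C ρ)
                    (LinearMap.id : C ⊗[k] H →ₗ[k] C ⊗[k] H)
                    (smashComul k H C ρ (i.2 ⊗ₜ[k] j.2))) := by
          rw [WSCAux.smashP_apply ρ c h]
          simp only [map_sum, map_smul]
      _ = ∑ i ∈ WSCAux.rrep ρ c, ∑ j ∈ WSCAux.corep k h,
            Coalgebra.counit (R := k) (i.1 * j.1)
              • smashP k H C ρ (i.2 ⊗ₜ[k] j.2) :=
          Finset.sum_congr rfl fun i _ => Finset.sum_congr rfl fun j _ => by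
            rw [WSCAux.goalL ρ hcc2 i.2 j.2]
      _ = smashP k H C ρ (smashP k H C ρ (c ⊗ₜ[k] h)) := by
          rw [WSCAux.smashP_apply ρ c h]
          simp only [map_sum, map_smul]
      _ = smashP k H C ρ (c ⊗ₜ[k] h) := WSCAux.PP ρ hmul hcc3 c h
  · calc TensorProduct.rid k (C ⊗[k] H)
          (TensorProduct.map (LinearMap.id : C ⊗[k] H →ₗ[k] C ⊗[k] H)
            (smashCounit k H C ρ)
            (smashComul k H C ρ (smashP k H C ρ (c ⊗ₜ[k] h))))
        = ∑ i ∈ WSCAux.rrep ρ c, ∑ j ∈ WSCAux.corep k h,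
            Coalgebra.counit (R := k) (i.1 * j.1)
              • TensorProduct.rid k (C ⊗[k] H)
                  (TensorProduct.map (LinearMap.id : C ⊗[k] H →ₗ[k] C ⊗[k] H)
                    (smashCounit k H C ρ)
                    (smashComul k H C ρ (i.2 ⊗ₜ[k] j.2))) := by
          rw [WSCAux.smashP_apply ρ c h]
          simp only [map_sum, map_smul]
      _ = ∑ i ∈ WSCAux.rrep ρ c, ∑ j ∈ WSCAux.corep k h,
            Coalgebra.counit (R := k) (i.1 * j.1)
              • ∑ e ∈ WSCAux.corep k i.2, e.1 ⊗ₜ[k] (WSCAux.rmap ρ e.2 * j.2) :=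
          Finset.sum_congr rfl fun i _ => Finset.sum_congr rfl fun j _ => by
            rw [WSCAux.goalR ρ hmul hcc3 i.2 j.2]
      _ = smashP k H C ρ (c ⊗ₜ[k] h) :=
          WSCAux.QP ρ hmul hwb5 hcc2 hcc3 hcc4 c h

end
end

section
/- Let H be a commutative weak Hopf algebra over a field k and let C be a weak bialgebra over k which is a left H-comodule bialgebra via ρ. Then for all b,c∈C and h,k∈H, P(c⊗h)·P(b⊗k)=P(cb⊗hk) in the componentwise algebra C⊗H; i.e. (c×h)(b×k)=cb×hk. -/
open TensorProduct

noncomputable section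
variable (k : Type*) [Field k]
variable (H : Type*) [Ring H] [Algebra k H] [Coalgebra k H]
variable (C : Type*) [Ring C] [Algebra k C] [Coalgebra k C]

/-- `C` is a left `H`-comodule bialgebra via `ρ`. -/
def IsComoduleBialgebra (ρ : C →ₗ[k] H ⊗[k] C) : Prop :=
  IsComoduleCoalgebra k H C ρ ∧ (∀ c d : C, ρ (c * d) = ρ c * ρ d) ∧
  TensorProduct.map (epsS k H) (LinearMap.id : C →ₗ[k] C) (ρ 1) = ρ 1

/-- The antipode candidate `Ŝ(c ⊗ h) = P(S_C(c⁽⁰⁾) ⊗ S_H(c⁽⁻¹⁾h))` on the smash coproduct. -/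
def smashS (ρ : C →ₗ[k] H ⊗[k] C) (SC : C →ₗ[k] C) (SH : H →ₗ[k] H) :
    C ⊗[k] H →ₗ[k] C ⊗[k] H :=
  smashP k H C ρ
  ∘ₗ TensorProduct.map SC (SH ∘ₗ LinearMap.mul' k H)
  ∘ₗ (TensorProduct.assoc k C H H).toLinearMap
  ∘ₗ TensorProduct.map (TensorProduct.comm k H C).toLinearMap (LinearMap.id : H →ₗ[k] H)
  ∘ₗ TensorProduct.map ρ (LinearMap.id : H →ₗ[k] H)

end


noncomputable section AuxSmash

variable {k : Type*} [Field k]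
variable {H : Type*} [Ring H] [Algebra k H] [Coalgebra k H]

/-- `Lmap y (p ⊗ q) = ε (y * p) • q`. -/
def Lmap (y : H) : H ⊗[k] H →ₗ[k] H :=
  (TensorProduct.lid k H).toLinearMap
    ∘ₗ TensorProduct.map ((Coalgebra.counit : H →ₗ[k] k) ∘ₗ LinearMap.mulLeft k y)
        (LinearMap.id : H →ₗ[k] H)

@[simp] lemma Lmap_tmul (y p q : H) :
    Lmap (k := k) y (p ⊗ₜ[k] q) = Coalgebra.counit (R := k) (y * p) • q := by
  simp [Lmap]

lemma epsPair_tmul (a c x y : H) :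
    epsPair k H a c (x ⊗ₜ[k] y)
      = Coalgebra.counit (R := k) (a * x) * Coalgebra.counit (R := k) (y * c) := by
  simp [epsPair, smul_eq_mul]

lemma Lmap_one_comul (a : H) : Lmap (k := k) (1 : H) (Coalgebra.comul a) = a := by
  have h1 : ((Coalgebra.counit : H →ₗ[k] k) ∘ₗ LinearMap.mulLeft k (1 : H))
      = (Coalgebra.counit : H →ₗ[k] k) := by
    ext x; simp
  have h2 : (TensorProduct.map (Coalgebra.counit : H →ₗ[k] k) (LinearMap.id : H →ₗ[k] H))
      (Coalgebra.comul a) = (1 : k) ⊗ₜ[k] a := Coalgebra.rTensor_counit_comul a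
  rw [Lmap]
  simp [h1, h2]

lemma eps_merge
    (hax : ∀ a b c : H,
      Coalgebra.counit (R := k) (a * b * c) = epsPair k H a c (Coalgebra.comul b))
    (y z : H) :
    epsPair k H y z (Coalgebra.comul (R := k) (1 : H)) = Coalgebra.counit (R := k) (y * z) := by
  rw [← hax y 1 z, mul_one]

lemma Lmap_mulLeft (x f : H) (u : H ⊗[k] H) :
    Lmap (k := k) x ((f ⊗ₜ[k] (1 : H)) * u) = Lmap (k := k) (x * f) u := by
  induction u using TensorProduct.induction_on with
  | zero => simp
  | tmul p q => simp [Algebra.TensorProduct.tmul_mul_tmul, mul_assoc]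
  | add u v hu hv => rw [mul_add, map_add, hu, hv, map_add]

lemma comul_expansion
    (hiii : TensorProduct.assoc k H H H
        (Coalgebra.comul (R := k) (1 : H) ⊗ₜ[k] (1 : H)) *
        ((1 : H) ⊗ₜ[k] Coalgebra.comul (R := k) (1 : H))
      = TensorProduct.assoc k H H H
        (TensorProduct.map (Coalgebra.comul (R := k)) (LinearMap.id : H →ₗ[k] H)
          (Coalgebra.comul (R := k) (1 : H))))
    (S : Finset (H × H)) (hS : Coalgebra.comul (R := k) (1 : H) = ∑ p ∈ S, p.1 ⊗ₜ[k] p.2) :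
    (∑ p ∈ S, p.1 ⊗ₜ[k] Coalgebra.comul (R := k) p.2 : H ⊗[k] (H ⊗[k] H))
      = ∑ p ∈ S, p.1 ⊗ₜ[k] ((p.2 ⊗ₜ[k] (1 : H)) * Coalgebra.comul (R := k) (1 : H)) := by
  have h1 : (∑ p ∈ S, p.1 ⊗ₜ[k] Coalgebra.comul (R := k) p.2 : H ⊗[k] (H ⊗[k] H))
      = (Coalgebra.comul (R := k) (A := H)).lTensor H (Coalgebra.comul (R := k) (1 : H)) := by
    rw [hS, map_sum]
    exact Finset.sum_congr rfl fun p _ => by simp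
  have h2 : TensorProduct.assoc k H H H (Coalgebra.comul (R := k) (1 : H) ⊗ₜ[k] (1 : H))
      = ∑ p ∈ S, p.1 ⊗ₜ[k] (p.2 ⊗ₜ[k] (1 : H)) := by
    rw [hS, TensorProduct.sum_tmul, map_sum]
    exact Finset.sum_congr rfl fun p _ => by simp
  have h3 : (TensorProduct.map (Coalgebra.comul (R := k)) (LinearMap.id : H →ₗ[k] H)
        (Coalgebra.comul (R := k) (1 : H)))
      = (Coalgebra.comul (R := k) (A := H)).rTensor H (Coalgebra.comul (R := k) (1 : H)) := rfl
  rw [h1, ← Coalgebra.coassoc_apply, ← h3, ← hiii, h2, Finset.sum_mul]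
  refine Finset.sum_congr rfl fun p _ => ?_
  rw [Algebra.TensorProduct.tmul_mul_tmul, mul_one]

section WithHyps

variable (hcomm : ∀ x y : H, x * y = y * x)
variable (hmul : ∀ a b : H,
    Coalgebra.comul (R := k) (a * b) = Coalgebra.comul a * Coalgebra.comul b)
variable (hax : ∀ a b c : H,
    Coalgebra.counit (R := k) (a * b * c) = epsPair k H a c (Coalgebra.comul b))
variable (hiii : TensorProduct.assoc k H H H
        (Coalgebra.comul (R := k) (1 : H) ⊗ₜ[k] (1 : H)) *
        ((1 : H) ⊗ₜ[k] Coalgebra.comul (R := k) (1 : H))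
      = TensorProduct.assoc k H H H
        (TensorProduct.map (Coalgebra.comul (R := k)) (LinearMap.id : H →ₗ[k] H)
          (Coalgebra.comul (R := k) (1 : H))))

include hcomm hmul hax hiii in
/-- `Σ ε(y h₁) h₂ = E(y) h` where `E(y) = Σ ε(y 1₁) 1₂`. -/
lemma Lmap_comul_eq (y h : H) :
    Lmap (k := k) y (Coalgebra.comul h)
      = Lmap (k := k) y (Coalgebra.comul (R := k) (1 : H)) * h := by
  obtain ⟨S, hS⟩ := TensorProduct.exists_finset (Coalgebra.comul (R := k) (1 : H))
  -- the auxiliary map Φ : a ⊗ u ↦ ε(y a) • Lmap 1 (u * Δ h)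
  set Φ : H ⊗[k] (H ⊗[k] H) →ₗ[k] H :=
    (TensorProduct.lid k H).toLinearMap
      ∘ₗ TensorProduct.map ((Coalgebra.counit : H →ₗ[k] k) ∘ₗ LinearMap.mulLeft k y)
          ((Lmap (k := k) (1 : H)) ∘ₗ LinearMap.mulRight k (Coalgebra.comul (R := k) h))
    with hΦ
  have hΦ_apply : ∀ (a : H) (u : H ⊗[k] H),
      Φ (a ⊗ₜ[k] u)
        = Coalgebra.counit (R := k) (y * a) •
            Lmap (k := k) (1 : H) (u * Coalgebra.comul (R := k) h) := by
    intro a u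
    simp [hΦ, LinearMap.mulRight_apply]
  have key := congrArg Φ (comul_expansion hiii S hS)
  rw [map_sum, map_sum] at key
  simp only [hΦ_apply] at key
  -- left side of key equals the RHS of the goal
  have hR : Lmap (k := k) y (Coalgebra.comul (R := k) (1 : H)) * h
      = ∑ p ∈ S, Coalgebra.counit (R := k) (y * p.1) •
          Lmap (k := k) (1 : H) (Coalgebra.comul (R := k) p.2 * Coalgebra.comul (R := k) h) := by
    rw [hS, map_sum, Finset.sum_mul]
    refine Finset.sum_congr rfl fun p _ => ?_
    rw [Lmap_tmul, smul_mul_assoc, ← hmul, Lmap_one_comul]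
  -- right side of key simplifies
  have hKey2 : ∀ p : H × H,
      Coalgebra.counit (R := k) (y * p.1) •
          Lmap (k := k) (1 : H)
            ((p.2 ⊗ₜ[k] (1 : H)) * Coalgebra.comul (R := k) (1 : H) *
              Coalgebra.comul (R := k) h)
        = Coalgebra.counit (R := k) (y * p.1) •
            Lmap (k := k) p.2 (Coalgebra.comul (R := k) h) := by
    intro p
    rw [mul_assoc, ← hmul, one_mul, Lmap_mulLeft, one_mul]
  have hmaps : ∀ u : H ⊗[k] H,
      (∑ p ∈ S, Coalgebra.counit (R := k) (y * p.1) • Lmap (k := k) p.2 u)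
        = Lmap (k := k) y u := by
    intro u
    induction u using TensorProduct.induction_on with
    | zero => simp
    | tmul p0 q0 =>
      simp only [Lmap_tmul, smul_smul]
      rw [← Finset.sum_smul]
      congr 1
      have heq : (∑ p ∈ S, Coalgebra.counit (R := k) (y * p.1) *
          Coalgebra.counit (R := k) (p.2 * p0))
          = epsPair k H y p0 (Coalgebra.comul (R := k) (1 : H)) := by
        rw [hS, map_sum]
        exact Finset.sum_congr rfl fun p _ => (epsPair_tmul _ _ _ _).symm
      rw [heq, eps_merge hax]
    | add u v hu hv =>
      simp only [map_add, smul_add, Finset.sum_add_distrib, hu, hv]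
  rw [hR, key, Finset.sum_congr rfl fun p _ => hKey2 p]
  exact (hmaps (Coalgebra.comul (R := k) h)).symm

include hcomm hmul hax hiii in
/-- `E` is multiplicative: `E(x) E(y) = E(xy)`. -/
lemma Lmap_one_mul_Lmap_one (x y : H) :
    Lmap (k := k) x (Coalgebra.comul (R := k) (1 : H)) *
        Lmap (k := k) y (Coalgebra.comul (R := k) (1 : H))
      = Lmap (k := k) (x * y) (Coalgebra.comul (R := k) (1 : H)) := by
  obtain ⟨S, hS⟩ := TensorProduct.exists_finset (Coalgebra.comul (R := k) (1 : H))
  have hd := Lmap_comul_eq hcomm hmul hax hiii x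
      (Lmap (k := k) y (Coalgebra.comul (R := k) (1 : H)))
  rw [← hd]
  -- compute Δ(E y)
  set Φ : H ⊗[k] (H ⊗[k] H) →ₗ[k] H ⊗[k] H :=
    (TensorProduct.lid k (H ⊗[k] H)).toLinearMap
      ∘ₗ TensorProduct.map ((Coalgebra.counit : H →ₗ[k] k) ∘ₗ LinearMap.mulLeft k y)
          (LinearMap.id : H ⊗[k] H →ₗ[k] H ⊗[k] H)
    with hΦ
  have hΦ_apply : ∀ (a : H) (u : H ⊗[k] H),
      Φ (a ⊗ₜ[k] u) = Coalgebra.counit (R := k) (y * a) • u := by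
    intro a u; simp [hΦ]
  have key := congrArg Φ (comul_expansion hiii S hS)
  rw [map_sum, map_sum] at key
  simp only [hΦ_apply] at key
  have hEy : Coalgebra.comul (R := k)
      (Lmap (k := k) y (Coalgebra.comul (R := k) (1 : H)))
      = ∑ p ∈ S, Coalgebra.counit (R := k) (y * p.1) •
          ((p.2 ⊗ₜ[k] (1 : H)) * Coalgebra.comul (R := k) (1 : H)) := by
    have h0 : Lmap (k := k) y (Coalgebra.comul (R := k) (1 : H))
        = ∑ p ∈ S, Coalgebra.counit (R := k) (y * p.1) • p.2 := by
      rw [hS, map_sum]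
      exact Finset.sum_congr rfl fun p _ => Lmap_tmul _ _ _
    rw [h0, map_sum]
    simp only [map_smul]
    exact key
  rw [hEy, map_sum]
  calc ∑ p ∈ S, Lmap (k := k) x (Coalgebra.counit (R := k) (y * p.1) •
          ((p.2 ⊗ₜ[k] (1 : H)) * Coalgebra.comul (R := k) (1 : H)))
      = ∑ p ∈ S, ∑ q ∈ S, (Coalgebra.counit (R := k) (y * p.1) *
          Coalgebra.counit (R := k) ((x * p.2) * q.1)) • q.2 := by
        refine Finset.sum_congr rfl fun p _ => ?_
        rw [map_smul, Lmap_mulLeft, hS, map_sum, Finset.smul_sum]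
        exact Finset.sum_congr rfl fun q _ => by rw [Lmap_tmul, smul_smul]
    _ = ∑ q ∈ S, (∑ p ∈ S, Coalgebra.counit (R := k) (y * p.1) *
          Coalgebra.counit (R := k) (p.2 * (x * q.1))) • q.2 := by
        rw [Finset.sum_comm]
        refine Finset.sum_congr rfl fun q _ => ?_
        rw [← Finset.sum_smul]
        congr 1
        refine Finset.sum_congr rfl fun p _ => ?_
        congr 2
        rw [mul_assoc, ← mul_assoc p.2, hcomm p.2 x, mul_assoc]
    _ = Lmap (k := k) (x * y) (Coalgebra.comul (R := k) (1 : H)) := by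
        rw [hS, map_sum]
        refine Finset.sum_congr rfl fun q _ => ?_
        rw [Lmap_tmul]
        congr 1
        have h1 : (∑ p ∈ S, Coalgebra.counit (R := k) (y * p.1) *
            Coalgebra.counit (R := k) (p.2 * (x * q.1)))
            = epsPair k H y (x * q.1) (Coalgebra.comul (R := k) (1 : H)) := by
          rw [hS, map_sum]
          exact Finset.sum_congr rfl fun p _ => (epsPair_tmul _ _ _ _).symm
        rw [h1, eps_merge hax]
        congr 1
        rw [← mul_assoc, hcomm y x]

end WithHyps

variable {C : Type*} [AddCommGroup C] [Module k C] [Coalgebra k C]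

lemma smashP_repr {ι : Type*} (ρ : C →ₗ[k] H ⊗[k] C) (c : C) (h : H)
    (s : Finset ι) (a : ι → H) (x : ι → C) (hc : ρ c = ∑ i ∈ s, a i ⊗ₜ[k] x i) :
    smashP k H C ρ (c ⊗ₜ[k] h)
      = ∑ i ∈ s, x i ⊗ₜ[k] Lmap (k := k) (a i) (Coalgebra.comul (R := k) h) := by
  have hpure : ∀ (a0 : H) (x0 : C) (u : H ⊗[k] H),
      (TensorProduct.lid k (C ⊗[k] H)).toLinearMap
        (TensorProduct.map ((Coalgebra.counit : H →ₗ[k] k) ∘ₗ LinearMap.mul' k H)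
          (LinearMap.id : C ⊗[k] H →ₗ[k] C ⊗[k] H)
          ((TensorProduct.tensorTensorTensorComm k H C H H).toLinearMap
            ((a0 ⊗ₜ[k] x0) ⊗ₜ[k] u)))
        = x0 ⊗ₜ[k] Lmap (k := k) a0 u := by
    intro a0 x0 u
    induction u using TensorProduct.induction_on with
    | zero => simp
    | tmul p q =>
      simp [TensorProduct.tensorTensorTensorComm_tmul, LinearMap.mul'_apply,
        TensorProduct.tmul_smul, TensorProduct.smul_tmul']
    | add u v hu hv => simp only [TensorProduct.tmul_add, map_add, hu, hv]
  rw [smashP]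
  simp only [LinearMap.coe_comp, Function.comp_apply, LinearEquiv.coe_coe,
    TensorProduct.map_tmul]
  rw [hc, TensorProduct.sum_tmul, map_sum, map_sum, map_sum]
  exact Finset.sum_congr rfl fun i _ => hpure (a i) (x i) (Coalgebra.comul (R := k) h)

end AuxSmash

noncomputable section
variable (k : Type*) [Field k]
variable (H : Type*) [Ring H] [Algebra k H] [Coalgebra k H]
variable (C : Type*) [Ring C] [Algebra k C] [Coalgebra k C]

/-- In the weak smash coproduct, `(c × h)(b × l) = cb × hl`. -/
theorem smashP_mul (S : H →ₗ[k] H) (hcomm : ∀ x y : H, x * y = y * x)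
    (hH : IsWeakHopfAlgebra k H S) (hC : IsWeakBialgebra k C)
    (ρ : C →ₗ[k] H ⊗[k] C) (hρ : IsComoduleBialgebra k H C ρ) :
    ∀ (b c : C) (h l : H),
      smashP k H C ρ (c ⊗ₜ[k] h) * smashP k H C ρ (b ⊗ₜ[k] l)
        = smashP k H C ρ ((c * b) ⊗ₜ[k] (h * l)) := by
  obtain ⟨⟨hmulH, haxH, -, -, hiii5⟩, -, -, -⟩ := hH
  obtain ⟨-, hρmul, -⟩ := hρ
  intro b c h l
  obtain ⟨Sc, hc⟩ := TensorProduct.exists_finset (ρ c)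
  obtain ⟨Sb, hb⟩ := TensorProduct.exists_finset (ρ b)
  have hcb : ρ (c * b) = ∑ i ∈ Sc ×ˢ Sb, (i.1.1 * i.2.1) ⊗ₜ[k] (i.1.2 * i.2.2) := by
    rw [hρmul, hc, hb, Finset.sum_mul_sum, ← Finset.sum_product']
    exact Finset.sum_congr rfl fun i _ => Algebra.TensorProduct.tmul_mul_tmul _ _ _ _
  rw [smashP_repr ρ c h Sc Prod.fst Prod.snd hc,
    smashP_repr ρ b l Sb Prod.fst Prod.snd hb,
    smashP_repr ρ (c * b) (h * l) (Sc ×ˢ Sb) (fun i => i.1.1 * i.2.1)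
      (fun i => i.1.2 * i.2.2) hcb,
    Finset.sum_mul_sum, ← Finset.sum_product']
  refine Finset.sum_congr rfl fun i _ => ?_
  rw [Algebra.TensorProduct.tmul_mul_tmul]
  congr 1
  rw [Lmap_comul_eq hcomm hmulH haxH hiii5 i.1.1 h,
    Lmap_comul_eq hcomm hmulH haxH hiii5 i.2.1 l,
    Lmap_comul_eq hcomm hmulH haxH hiii5 (i.1.1 * i.2.1) (h * l),
    ← Lmap_one_mul_Lmap_one hcomm hmulH haxH hiii5 i.1.1 i.2.1]
  rw [mul_assoc, ← mul_assoc h, hcomm h, mul_assoc, ← mul_assoc, ← mul_assoc]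

end
end

section
/- Let H be a commutative weak Hopf algebra over a field k and let C be a weak bialgebra over k which is a left H-comodule bialgebra via ρ. Then the coproduct Δ̃ is multiplicative on the weak smash coproduct: for all b,c∈C and h,k∈H, Δ̃((c×h)(b×k)) = Δ̃(c×h)·Δ̃(b×k), where the product on (C⊗H)⊗(C⊗H) is componentwise. -/
open TensorProduct

section MulHelpers
open TensorProduct

lemma algEquiv_linear_mul {R A B : Type*} [CommSemiring R] [Semiring A] [Semiring B]
    [Algebra R A] [Algebra R B] (e : A ≃ₐ[R] B) (x y : A) :
    e.toLinearEquiv (x * y) = e.toLinearEquiv x * e.toLinearEquiv y :=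
  map_mul e x y

lemma assoc_linear_mul {k A B C : Type*} [Field k] [Ring A] [Algebra k A] [Ring B] [Algebra k B]
    [Ring C] [Algebra k C] (x y : (A ⊗[k] B) ⊗[k] C) :
    TensorProduct.assoc k A B C (x * y)
      = TensorProduct.assoc k A B C x * TensorProduct.assoc k A B C y := by
  rw [← TensorProduct.AlgebraTensorModule.assoc_eq, ← Algebra.TensorProduct.assoc_toLinearEquiv]
  exact algEquiv_linear_mul _ x y

lemma assoc_symm_linear_mul {k A B C : Type*} [Field k] [Ring A] [Algebra k A] [Ring B]
    [Algebra k B] [Ring C] [Algebra k C] (x y : A ⊗[k] (B ⊗[k] C)) :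
    (TensorProduct.assoc k A B C).symm (x * y)
      = (TensorProduct.assoc k A B C).symm x * (TensorProduct.assoc k A B C).symm y := by
  rw [← TensorProduct.AlgebraTensorModule.assoc_eq, ← Algebra.TensorProduct.assoc_toLinearEquiv, ← AlgEquiv.toLinearEquiv_symm]
  exact algEquiv_linear_mul _ x y

lemma tttComm_linear_mul {k A B A' B' : Type*} [Field k] [Ring A] [Algebra k A] [Ring B]
    [Algebra k B] [Ring A'] [Algebra k A'] [Ring B'] [Algebra k B']
    (x y : (A ⊗[k] B) ⊗[k] (A' ⊗[k] B')) :
    TensorProduct.tensorTensorTensorComm k A B A' B' (x * y)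
      = TensorProduct.tensorTensorTensorComm k A B A' B' x *
        TensorProduct.tensorTensorTensorComm k A B A' B' y := by
  rw [← TensorProduct.AlgebraTensorModule.tensorTensorTensorComm_eq, ← Algebra.TensorProduct.tensorTensorTensorComm_toLinearEquiv]
  exact algEquiv_linear_mul _ x y

lemma map_linear_mul {k A B A' B' : Type*} [Field k] [Ring A] [Algebra k A] [Ring B]
    [Algebra k B] [Ring A'] [Algebra k A'] [Ring B'] [Algebra k B']
    (f : A →ₗ[k] A') (g : B →ₗ[k] B')
    (hf : ∀ x y : A, f (x * y) = f x * f y) (hg : ∀ x y : B, g (x * y) = g x * g y)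
    (u v : A ⊗[k] B) :
    TensorProduct.map f g (u * v) = TensorProduct.map f g u * TensorProduct.map f g v := by
  induction u using TensorProduct.induction_on with
  | zero => simp
  | add x y hx hy => simp [add_mul, hx, hy]
  | tmul a b =>
    induction v using TensorProduct.induction_on with
    | zero => simp
    | add x y hx hy => simp [mul_add, hx, hy]
    | tmul c d =>
      simp [Algebra.TensorProduct.tmul_mul_tmul, hf, hg]

lemma mul'_linear_mul {k H : Type*} [Field k] [Ring H] [Algebra k H]
    (hcomm : ∀ x y : H, x * y = y * x) (u v : H ⊗[k] H) :
    LinearMap.mul' k H (u * v) = LinearMap.mul' k H u * LinearMap.mul' k H v := by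
  induction u using TensorProduct.induction_on with
  | zero => simp
  | add x y hx hy => simp [add_mul, hx, hy]
  | tmul a b =>
    induction v using TensorProduct.induction_on with
    | zero => simp
    | add x y hx hy => simp [mul_add, hx, hy]
    | tmul c d =>
      simp only [Algebra.TensorProduct.tmul_mul_tmul, LinearMap.mul'_apply]
      rw [mul_assoc a c (b * d), ← mul_assoc c b d, hcomm c b, mul_assoc b c d,
        ← mul_assoc a b (c * d)]

lemma smashComul_mul {k : Type*} [Field k] {H : Type*} [Ring H] [Algebra k H] [Coalgebra k H]
    {C : Type*} [Ring C] [Algebra k C] [Coalgebra k C]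
    (hcomm : ∀ x y : H, x * y = y * x)
    (hHmul : ∀ a b : H, Coalgebra.comul (R := k) (a * b) = Coalgebra.comul a * Coalgebra.comul b)
    (hCmul : ∀ a b : C, Coalgebra.comul (R := k) (a * b) = Coalgebra.comul a * Coalgebra.comul b)
    (ρ : C →ₗ[k] H ⊗[k] C) (hρmul : ∀ c d : C, ρ (c * d) = ρ c * ρ d)
    (x y : C ⊗[k] H) :
    smashComul k H C ρ (x * y) = smashComul k H C ρ x * smashComul k H C ρ y := by
  simp only [smashComul, LinearMap.coe_comp, Function.comp_apply, LinearEquiv.coe_coe]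
  rw [map_linear_mul, tttComm_linear_mul, map_linear_mul]
  · intro u v
    simp only [LinearMap.coe_comp, Function.comp_apply, LinearEquiv.coe_coe]
    rw [assoc_linear_mul, map_linear_mul]
    · intro a b; rfl
    · exact mul'_linear_mul hcomm
  · intro a b; rfl
  · intro u v
    simp only [LinearMap.coe_comp, Function.comp_apply, LinearEquiv.coe_coe]
    rw [hCmul, map_linear_mul, assoc_symm_linear_mul]
    · intro a b; rfl
    · exact hρmul
  · exact hHmul

end MulHelpers

noncomputable section
variable (k : Type*) [Field k]
variable (H : Type*) [Ring H] [Algebra k H] [Coalgebra k H]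
variable (C : Type*) [Ring C] [Algebra k C] [Coalgebra k C]

/-- The smash coproduct `Δ̃` is multiplicative on the weak smash coproduct `C × H`. -/
theorem smashComul_multiplicative (S : H →ₗ[k] H) (hcomm : ∀ x y : H, x * y = y * x)
    (hH : IsWeakHopfAlgebra k H S) (hC : IsWeakBialgebra k C)
    (ρ : C →ₗ[k] H ⊗[k] C) (hρ : IsComoduleBialgebra k H C ρ) :
    ∀ (b c : C) (h l : H),
      smashComul k H C ρ (smashP k H C ρ (c ⊗ₜ[k] h) * smashP k H C ρ (b ⊗ₜ[k] l))
        = smashComul k H C ρ (smashP k H C ρ (c ⊗ₜ[k] h)) *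
            smashComul k H C ρ (smashP k H C ρ (b ⊗ₜ[k] l)) := by
  intro b c h l
  exact smashComul_mul hcomm hH.1.1 hC.1 ρ hρ.2.1 _ _

end
end
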